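/- arXiv:1303.0010 — 8 statements merged into one kernel-verified Lean document; each statement's English description precedes it below -/
import Mathlib

section
/- Let n ≥ 1, let T be an n-dimensional simplex in ℝ^n with vertices v_0, v_1, ..., v_n (all with nonnegative coordinates), and let X_1, ..., X_n be positive reals. Then the integral over T of n! · X_1⋯X_n / (1 + a·X)^{n+1} da equals n! · Vol(T) · X_1⋯X_n / ∏_{i=0}^{n} (1 + v_i · X), where a·X denotes a_1 X_1 + ⋯ + a_n X_n and Vol(T) is the Lebesgue measure of T. -/
open MeasureTheory Finset

namespace SegreAux

noncomputable section

/-- The corner simplex in `ℝ^n`. -/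
def S (n : ℕ) : Set (Fin n → ℝ) := {x | (∀ i, 0 ≤ x i) ∧ ∑ i, x i ≤ 1}

/-- barycentric linear form -/
def lc {n : ℕ} (c : Fin (n + 1) → ℝ) (x : Fin n → ℝ) : ℝ :=
  (1 - ∑ i, x i) * c 0 + ∑ i, x i * c i.succ

lemma continuous_lc {n : ℕ} (c : Fin (n + 1) → ℝ) : Continuous (lc c) := by
  unfold lc
  fun_prop

lemma measurableSet_S (n : ℕ) : MeasurableSet (S n) := by
  have : S n = (⋂ i, {x : Fin n → ℝ | 0 ≤ x i}) ∩ {x | ∑ i, x i ≤ 1} := by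
    ext x; simp [S, Set.mem_iInter]
  rw [this]
  refine MeasurableSet.inter (MeasurableSet.iInter fun i => ?_) ?_
  · exact measurableSet_le measurable_const (measurable_pi_apply i)
  · exact measurableSet_le (by fun_prop) measurable_const

lemma isCompact_S (n : ℕ) : IsCompact (S n) := by
  have hsub : S n ⊆ Set.Icc (0 : Fin n → ℝ) 1 := by
    rintro x ⟨h0, h1⟩
    refine ⟨fun i => h0 i, fun i => ?_⟩
    calc x i ≤ ∑ j, x j := Finset.single_le_sum (fun j _ => h0 j) (mem_univ i)
    _ ≤ 1 := h1
  have hclosed : IsClosed (S n) := by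
    have : S n = (⋂ i, {x : Fin n → ℝ | 0 ≤ x i}) ∩ {x | ∑ i, x i ≤ 1} := by
      ext x; simp [S, Set.mem_iInter]
    rw [this]
    refine IsClosed.inter (isClosed_iInter fun i => ?_) ?_
    · exact isClosed_le continuous_const (continuous_apply i)
    · exact isClosed_le (by fun_prop) continuous_const
  exact (isCompact_Icc).of_isClosed_subset hclosed hsub

lemma lc_ge {n : ℕ} {c : Fin (n + 1) → ℝ} {ε : ℝ} (hc : ∀ i, ε ≤ c i)
    {x : Fin n → ℝ} (hx : x ∈ S n) : ε ≤ lc c x := by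
  obtain ⟨h0, h1⟩ := hx
  have key : (1 - ∑ i, x i) * ε + ∑ i, x i * ε ≤ lc c x := by
    unfold lc
    have h1' : 0 ≤ 1 - ∑ i, x i := by linarith
    refine add_le_add (mul_le_mul_of_nonneg_left (hc 0) h1')
      (Finset.sum_le_sum fun i _ => mul_le_mul_of_nonneg_left (hc i.succ) (h0 i))
  calc ε = (1 - ∑ i, x i) * ε + ∑ i, x i * ε := by
        rw [← Finset.sum_mul]; ring
  _ ≤ lc c x := key

lemma lc_pos {n : ℕ} {c : Fin (n + 1) → ℝ} (hc : ∀ i, 0 < c i)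
    {x : Fin n → ℝ} (hx : x ∈ S n) : 0 < lc c x := by
  obtain ⟨i, hi⟩ := Finset.exists_min_image univ c ⟨0, mem_univ 0⟩
  have := lc_ge (c := c) (ε := c i) (fun j => hi.2 j (mem_univ j)) hx
  linarith [hc i]

lemma integrableOn_lc_pow {n : ℕ} {c : Fin (n + 1) → ℝ} (hc : ∀ i, 0 < c i) (m : ℕ) :
    IntegrableOn (fun x => ((lc c x) ^ m)⁻¹) (S n) volume := by
  apply ContinuousOn.integrableOn_compact (isCompact_S n)
  apply ContinuousOn.inv₀
  · exact ((continuous_lc c).pow m).continuousOn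
  · intro x hx
    exact pow_ne_zero m (lc_pos hc hx).ne'



lemma key1d (m : ℕ) {A B L : ℝ} (hA : 0 < A) (hL : 0 ≤ L) (hC : 0 < A + L * B)
    (hB : B ≠ 0) :
    ∫ t in (0:ℝ)..L, ((A + t * B) ^ (m + 2))⁻¹
      = (((m : ℝ) + 1) * B)⁻¹ * ((A ^ (m + 1))⁻¹ - ((A + L * B) ^ (m + 1))⁻¹) := by
  have hpos : ∀ t ∈ Set.uIcc (0:ℝ) L, 0 < A + t * B := by
    intro t ht
    rw [Set.uIcc_of_le hL] at ht
    obtain ⟨h0, h1⟩ := ht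
    rcases le_or_gt 0 B with h | h
    · nlinarith
    · nlinarith
  have hderiv : ∀ t ∈ Set.uIcc (0:ℝ) L,
      HasDerivAt (fun t : ℝ => -(((m : ℝ) + 1) * B)⁻¹ * ((A + t * B) ^ (m + 1))⁻¹)
        (((A + t * B) ^ (m + 2))⁻¹) t := by
    intro t ht
    have hne : A + t * B ≠ 0 := (hpos t ht).ne'
    have h1 : HasDerivAt (fun t : ℝ => A + t * B) B t := by
      simpa using ((hasDerivAt_id t).mul_const B).const_add A
    have h2 : HasDerivAt (fun t : ℝ => (A + t * B) ^ (m + 1))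
        ((((m : ℕ) + 1 : ℕ) : ℝ) * (A + t * B) ^ m * B) t := by
      simpa using h1.fun_pow (m + 1)
    have h3 := (h2.fun_inv (pow_ne_zero _ hne)).const_mul (-(((m : ℝ) + 1) * B)⁻¹)
    refine HasDerivAt.congr_deriv h3 ?_
    have hmne : ((m : ℝ) + 1) * B ≠ 0 := by
      apply mul_ne_zero _ hB
      positivity
    push_cast
    rw [show ((A + t * B) ^ (m + 1)) ^ 2 = (A + t * B) ^ m * (A + t * B) ^ (m + 2) by ring]
    field_simp
    have hx : A + B * t ≠ 0 := by rwa [mul_comm]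
    rw [← div_div, div_self (pow_ne_zero _ hx)]
  have hint : IntervalIntegrable (fun t => ((A + t * B) ^ (m + 2))⁻¹) volume 0 L := by
    apply ContinuousOn.intervalIntegrable
    exact ContinuousOn.inv₀ (by fun_prop) (fun t ht => pow_ne_zero _ (hpos t ht).ne')
  rw [intervalIntegral.integral_eq_sub_of_hasDerivAt hderiv hint]
  simp only [zero_mul, add_zero]
  ring


lemma feynman_succ_ne (n : ℕ)
    (IH : ∀ c : Fin (n + 1) → ℝ, (∀ i, 0 < c i) →
      ∫ x in S n, ((lc c x) ^ (n + 1))⁻¹ = ((n.factorial : ℝ) * ∏ i, c i)⁻¹)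
    (c : Fin (n + 2) → ℝ) (hc : ∀ i, 0 < c i) (hne : c (Fin.last (n + 1)) ≠ c 0) :
    ∫ x in S (n + 1), ((lc c x) ^ (n + 2))⁻¹
      = (((n + 1).factorial : ℝ) * ∏ i, c i)⁻¹ := by
  have hBne : c (Fin.last (n + 1)) - c 0 ≠ 0 := sub_ne_zero.mpr hne
  set B : ℝ := c (Fin.last (n + 1)) - c 0 with hB
  set c' : Fin (n + 1) → ℝ := fun i => c i.castSucc with hc'
  set c'' : Fin (n + 1) → ℝ := Fin.cons (c (Fin.last (n + 1))) (fun j => c' j.succ) with hc''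
  have hc'pos : ∀ i, 0 < c' i := fun i => hc _
  have hc''pos : ∀ i, 0 < c'' i := by
    intro i
    refine Fin.cases ?_ ?_ i
    · simpa [hc''] using hc _
    · intro j; simp only [hc'', Fin.cons_succ]; exact hc _
  have hsum : ∀ (y : Fin n → ℝ) (t : ℝ), ∑ i, (Fin.snoc y t : Fin (n + 1) → ℝ) i = ∑ i, y i + t := by
    intro y t
    rw [Fin.sum_univ_castSucc]
    simp
  have hnn : ∀ (y : Fin n → ℝ) (t : ℝ),
      (∀ i : Fin (n + 1), 0 ≤ (Fin.snoc y t : Fin (n + 1) → ℝ) i) ↔ ((∀ i, 0 ≤ y i) ∧ 0 ≤ t) := by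
    intro y t
    constructor
    · intro h
      exact ⟨fun i => by simpa using h i.castSucc, by simpa using h (Fin.last n)⟩
    · rintro ⟨h1, h2⟩ i
      refine Fin.lastCases ?_ ?_ i
      · simpa using h2
      · intro j; simpa using h1 j
  have hlc_snoc : ∀ (y : Fin n → ℝ) (t : ℝ),
      lc c (Fin.snoc y t : Fin (n + 1) → ℝ) = lc c' y + t * B := by
    intro y t
    unfold lc
    rw [Fin.sum_univ_castSucc (f := fun i => (Fin.snoc y t : Fin (n + 1) → ℝ) i * c i.succ), hsum]
    simp only [Fin.snoc_castSucc, Fin.snoc_last, Fin.succ_castSucc, Fin.succ_last, hc', hB,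
      Fin.castSucc_zero]
    ring
  have hlc'' : ∀ y : Fin n → ℝ, lc c'' y = lc c' y + (1 - ∑ i, y i) * B := by
    intro y
    unfold lc
    simp only [hc'', Fin.cons_zero, Fin.cons_succ, hc', hB, Fin.castSucc_zero]
    ring
  -- Fubini setup
  set F : (Fin (n + 1) → ℝ) → ℝ := fun x => ((lc c x) ^ (n + 2))⁻¹ with hF
  have hmeas := measurableSet_S (n + 1)
  have hFint : IntegrableOn F (S (n + 1)) volume := integrableOn_lc_pow hc (n + 2)
  set e : (Fin (n + 1) → ℝ) ≃ᵐ ℝ × (Fin n → ℝ) :=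
    MeasurableEquiv.piFinSuccAbove (fun _ : Fin (n + 1) => ℝ) (Fin.last n) with he
  have hesymm : ∀ (t : ℝ) (y : Fin n → ℝ),
      e.symm (t, y) = (Fin.snoc y t : Fin (n + 1) → ℝ) := by
    intro t y
    simp only [he, MeasurableEquiv.piFinSuccAbove_symm_apply]
    exact Fin.insertNth_last' t y
  have hindint : Integrable ((S (n + 1)).indicator F) volume :=
    (integrable_indicator_iff hmeas).mpr hFint
  have hGint : Integrable (fun p : ℝ × (Fin n → ℝ) => (S (n + 1)).indicator F (e.symm p))
      ((volume : Measure ℝ).prod (volume : Measure (Fin n → ℝ))) := by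
    rw [← Measure.volume_eq_prod]
    have := ((volume_preserving_piFinSuccAbove (fun _ : Fin (n + 1) => ℝ)
      (Fin.last n)).integrable_comp_emb e.measurableEmbedding
      (g := fun p => (S (n + 1)).indicator F (e.symm p)))
    rw [← this]
    have : (fun p => (S (n + 1)).indicator F (e.symm p)) ∘ e = (S (n + 1)).indicator F := by
      funext x; simp
    rw [this]
    exact hindint
  have step1 : ∫ x in S (n + 1), F x
      = ∫ y, ∫ t, (S (n + 1)).indicator F (e.symm (t, y)) := by
    calc ∫ x in S (n + 1), F x = ∫ x, (S (n + 1)).indicator F x :=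
          (integral_indicator hmeas).symm
    _ = ∫ x, (fun p => (S (n + 1)).indicator F (e.symm p)) (e x) := by simp
    _ = ∫ p, (S (n + 1)).indicator F (e.symm p) := by
          rw [he]
          exact (volume_preserving_piFinSuccAbove (fun _ : Fin (n + 1) => ℝ)
            (Fin.last n)).integral_comp (MeasurableEquiv.measurableEmbedding _)
            (fun p => (S (n + 1)).indicator F
              ((MeasurableEquiv.piFinSuccAbove (fun _ : Fin (n + 1) => ℝ)
                (Fin.last n)).symm p))
    _ = ∫ y, ∫ t, (S (n + 1)).indicator F (e.symm (t, y)) := by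
          rw [Measure.volume_eq_prod]
          exact integral_prod_symm _ hGint
  -- evaluate the inner integral
  set J : (Fin n → ℝ) → ℝ := fun y =>
    (S n).indicator (fun y => (((n : ℝ) + 1) * B)⁻¹ *
      (((lc c' y) ^ (n + 1))⁻¹ - ((lc c'' y) ^ (n + 1))⁻¹)) y with hJ
  have hinner : ∀ y : Fin n → ℝ,
      (∫ t : ℝ, (S (n + 1)).indicator F (e.symm (t, y))) = J y := by
    intro y
    have hrw : ∀ t : ℝ, (S (n + 1)).indicator F (e.symm (t, y))
        = (if (∀ i, 0 ≤ y i) then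
            Set.indicator (Set.Icc 0 (1 - ∑ i, y i))
              (fun t => ((lc c' y + t * B) ^ (n + 2))⁻¹) t
          else 0) := by
      intro t
      rw [hesymm]
      by_cases hy : ∀ i, 0 ≤ y i
      · rw [if_pos hy]
        by_cases ht : t ∈ Set.Icc 0 (1 - ∑ i, y i)
        · rw [Set.indicator_of_mem ht, Set.indicator_of_mem, hF]
          · simp only [hlc_snoc]
          · refine ⟨(hnn y t).mpr ⟨hy, ht.1⟩, ?_⟩
            rw [hsum]
            have := ht.2
            linarith
        · rw [Set.indicator_of_notMem ht, Set.indicator_of_notMem]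
          intro hmem
          obtain ⟨h1, h2⟩ := hmem
          rw [hsum] at h2
          exact ht ⟨((hnn y t).mp h1).2, by linarith⟩
      · rw [if_neg hy, Set.indicator_of_notMem]
        intro hmem
        exact hy fun i => ((hnn y t).mp hmem.1).1 i
    simp_rw [hrw]
    by_cases hy : ∀ i, 0 ≤ y i
    · simp only [if_pos hy]
      by_cases hys : ∑ i, y i ≤ 1
      · have hyS : y ∈ S n := ⟨hy, hys⟩
        have hL : (0:ℝ) ≤ 1 - ∑ i, y i := by linarith
        have hA : 0 < lc c' y := lc_pos hc'pos hyS
        have hC : 0 < lc c' y + (1 - ∑ i, y i) * B := by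
          rw [← hlc'']; exact lc_pos hc''pos hyS
        rw [integral_indicator measurableSet_Icc, integral_Icc_eq_integral_Ioc,
          ← intervalIntegral.integral_of_le hL, key1d n hA hL hC hBne]
        simp only [hJ]
        rw [Set.indicator_of_mem hyS, hlc'' y]
      · have hempty : Set.Icc (0:ℝ) (1 - ∑ i, y i) = ∅ :=
          Set.Icc_eq_empty (by intro h; exact hys (by linarith))
        rw [hempty]
        simp only [Set.indicator_empty, Pi.zero_apply, integral_zero]
        simp only [hJ]
        rw [Set.indicator_of_notMem (fun hmem => hys hmem.2)]
    · simp only [if_neg hy, integral_zero]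
      simp only [hJ]
      rw [Set.indicator_of_notMem (fun hmem => hy hmem.1)]
  have step2 : ∫ x in S (n + 1), F x
      = (((n : ℝ) + 1) * B)⁻¹ *
        ((∫ y in S n, ((lc c' y) ^ (n + 1))⁻¹) - ∫ y in S n, ((lc c'' y) ^ (n + 1))⁻¹) := by
    rw [step1]
    simp_rw [hinner]
    simp only [hJ]
    rw [integral_indicator (measurableSet_S n), integral_const_mul,
      integral_sub (integrableOn_lc_pow hc'pos (n + 1)) (integrableOn_lc_pow hc''pos (n + 1))]
  rw [step2, IH c' hc'pos, IH c'' hc''pos]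
  -- final algebra
  have hprod : ∏ i, c i = (∏ i, c' i) * c (Fin.last (n + 1)) := by
    rw [Fin.prod_univ_castSucc]
  have hprodc' : ∏ i, c' i = c 0 * ∏ j : Fin n, c' j.succ := by
    rw [Fin.prod_univ_succ]
    simp [hc']
  have hprodc'' : ∏ i, c'' i = c (Fin.last (n + 1)) * ∏ j : Fin n, c' j.succ := by
    rw [Fin.prod_univ_succ]
    simp [hc'']
  have hP : 0 < ∏ j : Fin n, c' j.succ := Finset.prod_pos fun j _ => hc'pos j.succ
  have hfac : (0:ℝ) < (n.factorial : ℝ) := by positivity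
  have h0 : 0 < c 0 := hc 0
  have hl : 0 < c (Fin.last (n + 1)) := hc _
  rw [hprod, hprodc', hprodc'', hB, Nat.factorial_succ]
  push_cast
  field_simp


def corner (n : ℕ) : Fin (n + 1) → Fin n → ℝ :=
  Fin.cases 0 (fun k => Pi.single k 1)

lemma convex_S (n : ℕ) : Convex ℝ (S n) := by
  intro x hx y hy a b ha hb hab
  refine ⟨fun i => ?_, ?_⟩
  · have h : (a • x + b • y) i = a * x i + b * y i := rfl
    rw [h]
    have := hx.1 i; have := hy.1 i
    positivity
  · have h : ∑ i, (a • x + b • y) i = a * ∑ i, x i + b * ∑ i, y i := by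
      simp [Finset.sum_add_distrib, Finset.mul_sum]
    rw [h]
    nlinarith [hx.2, hy.2]

lemma corner_mem_S (n : ℕ) (i : Fin (n + 1)) : corner n i ∈ S n := by
  refine Fin.cases ?_ ?_ i
  · refine ⟨fun j => le_refl _, ?_⟩
    simp [corner]
  · intro k
    refine ⟨fun j => ?_, ?_⟩
    · simp only [corner, Fin.cases_succ]
      by_cases h : j = k
      · subst h; simp
      · rw [Pi.single_eq_of_ne h]
    · simp only [corner, Fin.cases_succ]
      rw [Finset.sum_eq_single k]
      · simp
      · intro b _ hb; exact Pi.single_eq_of_ne hb 1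
      · intro h; exact absurd (mem_univ k) h

lemma sum_single_eq_self {n : ℕ} (x : Fin n → ℝ) :
    ∑ k, x k • (Pi.single k 1 : Fin n → ℝ) = x := by
  funext j
  rw [Finset.sum_apply]
  rw [Finset.sum_eq_single j]
  · simp
  · intro b _ hb
    simp [Pi.single_eq_of_ne (Ne.symm hb)]
  · intro h; exact absurd (mem_univ j) h

lemma S_eq_convexHull (n : ℕ) : S n = convexHull ℝ (Set.range (corner n)) := by
  apply Set.Subset.antisymm
  · intro x hx
    have hw0 : ∀ i ∈ (univ : Finset (Fin (n + 1))),
        0 ≤ (Fin.cons (1 - ∑ j, x j) x : Fin (n + 1) → ℝ) i := by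
      intro i _
      refine Fin.cases ?_ ?_ i
      · simp only [Fin.cons_zero]
        linarith [hx.2]
      · intro k
        simp only [Fin.cons_succ]
        exact hx.1 k
    have hw1 : ∑ i, (Fin.cons (1 - ∑ j, x j) x : Fin (n + 1) → ℝ) i = 1 := by
      rw [Fin.sum_cons]; ring
    have hmem := Finset.centerMass_mem_convexHull univ hw0 (by rw [hw1]; norm_num)
      (fun i _ => Set.mem_range_self (f := corner n) i)
    rw [Finset.centerMass_eq_of_sum_1 _ _ hw1] at hmem
    have hxeq : ∑ i, (Fin.cons (1 - ∑ j, x j) x : Fin (n + 1) → ℝ) i • corner n i = x := by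
      rw [Fin.sum_univ_succ]
      simp only [Fin.cons_zero, Fin.cons_succ, corner, Fin.cases_zero, Fin.cases_succ,
        smul_zero, zero_add]
      exact sum_single_eq_self x
    rwa [hxeq] at hmem
  · apply convexHull_min
    · rintro _ ⟨i, rfl⟩
      exact corner_mem_S n i
    · exact convex_S n

theorem feynman : ∀ (n : ℕ) (c : Fin (n + 1) → ℝ), (∀ i, 0 < c i) →
    ∫ x in S n, ((lc c x) ^ (n + 1))⁻¹ = ((n.factorial : ℝ) * ∏ i, c i)⁻¹ := by
  intro n
  induction n with
  | zero =>
    intro c hc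
    have hS : S 0 = Set.univ := by
      ext x
      simp [S]
    have hlc : ∀ x : Fin 0 → ℝ, lc c x = c 0 := by
      intro x
      simp [lc]
    rw [hS]
    simp only [hlc, Measure.restrict_univ]
    rw [integral_const]
    have : (volume : Measure (Fin 0 → ℝ)) Set.univ = 1 := by
      rw [volume_pi, Measure.pi_univ]
      simp
    rw [measureReal_def, this]
    simp
  | succ n IH =>
    intro c hc
    by_cases hne : c (Fin.last (n + 1)) = c 0
    · -- degenerate case: continuity in the last coordinate
      have hlast0 : (Fin.last (n + 1)) ≠ (0 : Fin (n + 2)) := by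
        simp [Fin.ext_iff]
      obtain ⟨i₀, hi₀mem, hi₀⟩ := Finset.exists_min_image univ c ⟨0, mem_univ 0⟩
      set c0 := c 0 with hc0def
      have hc0 : 0 < c0 := hc 0
      set ε : ℝ := min (c0 / 2) (c i₀) with hε
      have hεpos : 0 < ε := lt_min (by linarith) (hc i₀)
      set Φ : ℝ → ℝ := fun r =>
        ∫ x in S (n + 1), ((lc (Function.update c (Fin.last (n + 1)) r) x) ^ (n + 2))⁻¹ with hΦ
      set Ψ : ℝ → ℝ := fun r =>
        (((n + 1).factorial : ℝ) * ∏ i, Function.update c (Fin.last (n + 1)) r i)⁻¹ with hΨ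
      have hupd : ∀ (r : ℝ) (x : Fin (n + 1) → ℝ),
          lc (Function.update c (Fin.last (n + 1)) r) x
            = lc c x + x (Fin.last n) * (r - c (Fin.last (n + 1))) := by
        intro r x
        unfold lc
        rw [Function.update_of_ne (Ne.symm hlast0)]
        have hsum : ∑ i, x i * Function.update c (Fin.last (n + 1)) r i.succ
            = ∑ i, (x i * c i.succ
                + (if i = Fin.last n then x (Fin.last n) * (r - c (Fin.last (n + 1))) else 0)) := by
          apply Finset.sum_congr rfl
          intro i _
          by_cases hi : i = Fin.last n
          · subst hi
            rw [if_pos rfl, Fin.succ_last, Function.update_self]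
            ring
          · have : i.succ ≠ Fin.last (n + 1) := by
              rw [← Fin.succ_last]
              exact fun h => hi (Fin.succ_injective _ h)
            rw [Function.update_of_ne this, if_neg hi]
            ring
        rw [hsum, Finset.sum_add_distrib, Finset.sum_ite_eq' univ (Fin.last n), if_pos (mem_univ _)]
        ring
      have hpos_upd : ∀ r : ℝ, c0 / 2 ≤ r → ∀ i, ε ≤ Function.update c (Fin.last (n + 1)) r i := by
        intro r hr i
        by_cases hi : i = Fin.last (n + 1)
        · subst hi
          rw [Function.update_self]
          exact le_trans (min_le_left _ _) hr
        · rw [Function.update_of_ne hi]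
          exact le_trans (min_le_right _ _) (hi₀ i (mem_univ i))
      have heq : ∀ᶠ r in nhdsWithin c0 {c0}ᶜ, Φ r = Ψ r := by
        have hev : ∀ᶠ r in nhdsWithin c0 {c0}ᶜ, c0 / 2 < r ∧ r ≠ c0 := by
          filter_upwards [(eventually_gt_nhds (by linarith : c0 / 2 < c0)).filter_mono
            nhdsWithin_le_nhds, self_mem_nhdsWithin] with r h1 h2
          exact ⟨h1, h2⟩
        filter_upwards [hev] with r hr
        have hposall : ∀ i, 0 < Function.update c (Fin.last (n + 1)) r i := by
          intro i
          have := hpos_upd r (le_of_lt hr.1) i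
          linarith [hεpos]
        have hne' : Function.update c (Fin.last (n + 1)) r (Fin.last (n + 1))
            ≠ Function.update c (Fin.last (n + 1)) r 0 := by
          rw [Function.update_self, Function.update_of_ne (Ne.symm hlast0)]
          exact hr.2
        exact feynman_succ_ne n IH _ hposall hne'
      have hΦtendsto : Filter.Tendsto Φ (nhdsWithin c0 {c0}ᶜ) (nhds (Φ c0)) := by
        have hbound : Integrable ((S (n + 1)).indicator fun _ => (ε ^ (n + 2))⁻¹)
            (volume : Measure (Fin (n + 1) → ℝ)) := by
          rw [integrable_indicator_iff (measurableSet_S (n + 1))]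
          exact integrableOn_const (isCompact_S (n + 1)).measure_lt_top.ne
        have key : Filter.Tendsto
            (fun r => ∫ x, (S (n + 1)).indicator
              (fun x => ((lc (Function.update c (Fin.last (n + 1)) r) x) ^ (n + 2))⁻¹) x)
            (nhdsWithin c0 {c0}ᶜ)
            (nhds (∫ x, (S (n + 1)).indicator
              (fun x => ((lc (Function.update c (Fin.last (n + 1)) c0) x) ^ (n + 2))⁻¹) x)) := by
          apply tendsto_integral_filter_of_dominated_convergence
            ((S (n + 1)).indicator fun _ => (ε ^ (n + 2))⁻¹)
          · filter_upwards with r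
            exact ((((continuous_lc _).pow (n + 2)).measurable.inv).aestronglyMeasurable).indicator
              (measurableSet_S (n + 1))
          · filter_upwards [(eventually_gt_nhds (by linarith : c0 / 2 < c0)).filter_mono
              (nhdsWithin_le_nhds : nhdsWithin c0 {c0}ᶜ ≤ nhds c0)] with r hr
            apply Filter.Eventually.of_forall
            intro x
            by_cases hx : x ∈ S (n + 1)
            · rw [Set.indicator_of_mem hx, Set.indicator_of_mem hx]
              have hlcge : ε ≤ lc (Function.update c (Fin.last (n + 1)) r) x :=
                lc_ge (hpos_upd r (le_of_lt hr)) hx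
              have hlcpos : 0 < lc (Function.update c (Fin.last (n + 1)) r) x := by
                linarith
              rw [Real.norm_eq_abs, abs_of_nonneg (by positivity)]
              gcongr
            · rw [Set.indicator_of_notMem hx, Set.indicator_of_notMem hx]
              simp
          · exact hbound
          · apply Filter.Eventually.of_forall
            intro x
            by_cases hx : x ∈ S (n + 1)
            · simp only [Set.indicator_of_mem hx, hupd]
              have hval : lc c x + x (Fin.last n) * (c0 - c (Fin.last (n + 1))) = lc c x := by
                rw [← hne]; ring
              have hct : ContinuousAt (fun r : ℝ =>
                  ((lc c x + x (Fin.last n) * (r - c (Fin.last (n + 1)))) ^ (n + 2))⁻¹) c0 := by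
                apply ContinuousAt.inv₀ (by fun_prop)
                rw [hval]
                exact pow_ne_zero _ (lc_pos hc hx).ne'
              exact hct.tendsto.mono_left nhdsWithin_le_nhds
            · simp only [Set.indicator_of_notMem hx]
              exact tendsto_const_nhds
        have hΦeq : Φ = fun r => ∫ x, (S (n + 1)).indicator
            (fun x => ((lc (Function.update c (Fin.last (n + 1)) r) x) ^ (n + 2))⁻¹) x := by
          funext r
          simp only [hΦ]
          rw [integral_indicator (measurableSet_S (n + 1))]
        rw [hΦeq]
        exact key
      have hprodupd : ∀ r : ℝ, ∏ i, Function.update c (Fin.last (n + 1)) r i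
          = r * ∏ i ∈ univ \ {Fin.last (n + 1)}, c i := by
        intro r
        rw [Finset.prod_update_of_mem (mem_univ _)]
      have hQpos : 0 < ∏ i ∈ univ \ {Fin.last (n + 1)}, c i :=
        Finset.prod_pos fun i _ => hc i
      have hΨtendsto : Filter.Tendsto Ψ (nhdsWithin c0 {c0}ᶜ) (nhds (Ψ c0)) := by
        have hct : ContinuousAt (fun r : ℝ =>
            (((n + 1).factorial : ℝ) * (r * ∏ i ∈ univ \ {Fin.last (n + 1)}, c i))⁻¹) c0 := by
          apply ContinuousAt.inv₀ (by fun_prop)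
          have : (0:ℝ) < ((n + 1).factorial : ℝ) * (c0 * ∏ i ∈ univ \ {Fin.last (n + 1)}, c i) := by
            have : (0:ℝ) < ((n + 1).factorial : ℝ) := by positivity
            positivity
          exact this.ne'
        have : Ψ = fun r =>
            (((n + 1).factorial : ℝ) * (r * ∏ i ∈ univ \ {Fin.last (n + 1)}, c i))⁻¹ := by
          funext r
          simp only [hΨ, hprodupd]
        rw [this]
        exact hct.tendsto.mono_left nhdsWithin_le_nhds
      have hfinal : Φ c0 = Ψ c0 :=
        tendsto_nhds_unique hΦtendsto (hΨtendsto.congr' (heq.mono fun r h => h.symm))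
      have hcc : Function.update c (Fin.last (n + 1)) c0 = c := by
        rw [← hne]
        exact Function.update_eq_self _ c
      simp only [hΦ, hΨ, hcc] at hfinal
      exact hfinal
    · exact feynman_succ_ne n IH c hc hne


section Main

variable {n : ℕ} (v : Fin (n + 1) → Fin n → ℝ)

/-- the linear part of the barycentric parametrization -/
def Mv : (Fin n → ℝ) →ₗ[ℝ] (Fin n → ℝ) :=
  Matrix.mulVecLin (Matrix.of fun j i => v i.succ j - v 0 j)

lemma Mv_apply (y : Fin n → ℝ) (j : Fin n) :
    Mv v y j = ∑ i, (v i.succ j - v 0 j) * y i := by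
  simp [Mv, Matrix.mulVecLin_apply, Matrix.mulVec, dotProduct]

lemma Mv_single (k : Fin n) : Mv v (Pi.single k 1) = fun j => v k.succ j - v 0 j := by
  funext j
  rw [Mv_apply]
  rw [Finset.sum_eq_single k]
  · simp
  · intro b _ hb; simp [Pi.single_eq_of_ne hb]
  · intro h; exact absurd (mem_univ k) h

/-- the barycentric parametrization as an affine map -/
def fv : (Fin n → ℝ) →ᵃ[ℝ] (Fin n → ℝ) where
  toFun := fun y => v 0 + Mv v y
  linear := Mv v
  map_vadd' := by
    intro p w
    show v 0 + Mv v (w + p) = Mv v w + (v 0 + Mv v p)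
    rw [map_add]
    abel

lemma fv_apply (y : Fin n → ℝ) : fv v y = v 0 + Mv v y := rfl

lemma fv_corner : fv v ∘ corner n = v := by
  funext i
  refine Fin.cases ?_ ?_ i
  · show fv v ((0 : Fin n → ℝ)) = v 0
    rw [fv_apply, map_zero, add_zero]
  · intro k
    show fv v (Pi.single k 1) = v k.succ
    rw [fv_apply, Mv_single]
    funext j
    simp

lemma hull_eq_image : convexHull ℝ (Set.range v) = fv v '' S n := by
  rw [S_eq_convexHull, AffineMap.image_convexHull, ← Set.range_comp, fv_corner]

lemma Mv_injective (hind : AffineIndependent ℝ v) : Function.Injective (Mv v) := by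
  have h1 := (affineIndependent_iff_linearIndependent_vsub ℝ v 0).mp hind
  have h2 : LinearIndependent ℝ (fun k : Fin n => v k.succ - v 0) := by
    have := h1.comp (fun k : Fin n => (⟨k.succ, Fin.succ_ne_zero k⟩ : {x : Fin (n + 1) // x ≠ 0}))
      (fun a b hab => by
        have : (a.succ : Fin (n + 1)) = b.succ := congrArg Subtype.val hab
        exact Fin.succ_injective n this)
    exact this
  intro y z hyz
  have hM : ∀ g : Fin n → ℝ, Mv v g = ∑ k, g k • (v k.succ - v 0) := by
    intro g
    funext j
    rw [Mv_apply]
    rw [Finset.sum_apply]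
    apply Finset.sum_congr rfl
    intro k _
    simp [mul_comm]
  have hzero : ∑ k, (y - z) k • (v k.succ - v 0) = 0 := by
    have : ∑ k, (y - z) k • (v k.succ - v 0)
        = ∑ k, y k • (v k.succ - v 0) - ∑ k, z k • (v k.succ - v 0) := by
      rw [← Finset.sum_sub_distrib]
      apply Finset.sum_congr rfl
      intro k _
      rw [Pi.sub_apply, sub_smul]
    rw [this, ← hM, ← hM, hyz, sub_self]
  have hcoef := Fintype.linearIndependent_iff.mp h2 (y - z) hzero
  funext k
  have := hcoef k
  rw [Pi.sub_apply] at this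
  linarith

lemma fv_injective (hind : AffineIndependent ℝ v) : Function.Injective (fv v) := by
  intro y z h
  apply Mv_injective v hind
  have : v 0 + Mv v y = v 0 + Mv v z := h
  exact add_left_cancel this

lemma volume_image_fv (s : Set (Fin n → ℝ)) :
    volume (fv v '' s) = ENNReal.ofReal |LinearMap.det (Mv v)| * volume s := by
  have h1 : fv v '' s = (fun z => v 0 + z) '' (Mv v '' s) := by
    rw [Set.image_image]
    rfl
  rw [h1, Set.image_add_left, measure_preimage_add, Measure.addHaar_image_linearMap]

end Main

end

end SegreAux

open SegreAux in
theorem simplex_segre_integral (n : ℕ) (hn : 0 < n)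
    (v : Fin (n + 1) → Fin n → ℝ) (hv : ∀ i j, 0 ≤ v i j)
    (hind : AffineIndependent ℝ v)
    (X : Fin n → ℝ) (hX : ∀ i, 0 < X i) :
    ∫ a in convexHull ℝ (Set.range v),
      (Nat.factorial n : ℝ) * (∏ i, X i) / (1 + ∑ i, a i * X i) ^ (n + 1) ∂volume
    = (Nat.factorial n : ℝ) * (volume (convexHull ℝ (Set.range v))).toReal *
        (∏ i, X i) / ∏ i, (1 + ∑ j, v i j * X j) := by
  classical
  have hc : ∀ i : Fin (n + 1), 0 < 1 + ∑ j, v i j * X j := by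
    intro i
    have h : 0 ≤ ∑ j, v i j * X j :=
      Finset.sum_nonneg fun j _ => mul_nonneg (hv i j) (hX j).le
    linarith
  set c : Fin (n + 1) → ℝ := fun i => 1 + ∑ j, v i j * X j with hcdef
  have hdet : ((Mv v).toContinuousLinearMap : (Fin n → ℝ) →L[ℝ] (Fin n → ℝ)).det
      = LinearMap.det (Mv v) := by
    rw [ContinuousLinearMap.det]
    congr 1
  have hf' : ∀ y ∈ S n, HasFDerivWithinAt (fv v)
      ((fun _ : Fin n → ℝ => ((Mv v).toContinuousLinearMap :
        (Fin n → ℝ) →L[ℝ] (Fin n → ℝ))) y) (S n) y := by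
    intro y _
    have h : HasFDerivAt (fun y : Fin n → ℝ => v 0 + Mv v y)
        ((Mv v).toContinuousLinearMap : (Fin n → ℝ) →L[ℝ] (Fin n → ℝ)) y := by
      simpa using (((Mv v).toContinuousLinearMap.hasFDerivAt (x := y)).const_add (v 0))
    exact h.hasFDerivWithinAt
  have hfy : ∀ y : Fin n → ℝ, 1 + ∑ j, (fv v y) j * X j = lc c y := by
    intro y
    have hMy : ∀ j, fv v y j = v 0 j + ∑ i, (v i.succ j - v 0 j) * y i := by
      intro j
      rw [fv_apply]
      show v 0 j + Mv v y j = _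
      rw [Mv_apply]
    simp only [hMy]
    unfold lc
    simp only [hcdef]
    have h1 : ∀ j, (v 0 j + ∑ i, (v i.succ j - v 0 j) * y i) * X j
        = v 0 j * X j + ∑ i, (v i.succ j * X j * y i - v 0 j * X j * y i) := by
      intro j
      rw [add_mul, Finset.sum_mul]
      congr 1
      apply Finset.sum_congr rfl
      intro i _
      ring
    simp only [h1]
    rw [Finset.sum_add_distrib, Finset.sum_comm]
    simp only [Finset.sum_sub_distrib]
    have h2 : ∀ i : Fin n, y i * (1 + ∑ j, v i.succ j * X j)
        = y i + ∑ j, v i.succ j * X j * y i := by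
      intro i
      rw [mul_add, mul_one, Finset.mul_sum]
      congr 1
      apply Finset.sum_congr rfl
      intro j _
      ring
    simp only [h2]
    rw [Finset.sum_add_distrib]
    have h3 : ∑ i : Fin n, ∑ j, v 0 j * X j * y i
        = (∑ j, v 0 j * X j) * ∑ i, y i := by
      rw [Finset.mul_sum]
      apply Finset.sum_congr rfl
      intro i _
      rw [Finset.sum_mul]
    rw [h3]
    ring
  have hvolS : (volume (S n)).toReal = ((n.factorial : ℝ))⁻¹ := by
    have h1 := feynman n (fun _ => 1) (fun _ => one_pos)
    have h2 : ∀ x : Fin n → ℝ, lc (fun _ => (1 : ℝ)) x = 1 := by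
      intro x
      unfold lc
      simp
    simp only [h2, one_pow, inv_one] at h1
    rw [setIntegral_const] at h1
    exact (by simpa using h1 : volume.real (S n) = _)
  have hchg : ∫ a in convexHull ℝ (Set.range v), ((1 + ∑ i, a i * X i) ^ (n + 1))⁻¹
      = |LinearMap.det (Mv v)| * ((n.factorial : ℝ) * ∏ i, c i)⁻¹ := by
    rw [hull_eq_image v]
    rw [integral_image_eq_integral_abs_det_fderiv_smul volume (measurableSet_S n)
      hf' ((fv_injective v hind).injOn)]
    simp only [hdet, smul_eq_mul]
    have : ∀ y : Fin n → ℝ, (1 + ∑ i, (fv v y) i * X i) = lc c y := hfy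
    simp_rw [this]
    rw [integral_const_mul, feynman n c hc]
  have hvolT : (volume (convexHull ℝ (Set.range v))).toReal
      = |LinearMap.det (Mv v)| * (n.factorial : ℝ)⁻¹ := by
    rw [hull_eq_image v, volume_image_fv, ENNReal.toReal_mul,
      ENNReal.toReal_ofReal (abs_nonneg _), hvolS]
  simp_rw [div_eq_mul_inv]
  rw [integral_const_mul, hchg, hvolT]
  have hprodc : 0 < ∏ i, c i := Finset.prod_pos fun i _ => hc i
  have hfacpos : (0 : ℝ) < (n.factorial : ℝ) := by positivity
  field_simp
end

section
/- Let n > 0, positive reals A and B. Then ∫_0^1 n! t^{n-1} / (A + Bt)^{n+1} dt = (n-1)! / (A (A+B)^n). -/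
theorem interval_power_integral (n : ℕ) (hn : 0 < n) (A B : ℝ) (hA : 0 < A) (hB : 0 < B) :
    ∫ t in (0:ℝ)..1, (Nat.factorial n : ℝ) * t ^ (n - 1) / (A + B * t) ^ (n + 1)
    = (Nat.factorial (n - 1) : ℝ) / (A * (A + B) ^ n) := by
  obtain ⟨m, rfl⟩ := Nat.exists_eq_succ_of_ne_zero hn.ne'
  have hpos : ∀ t ∈ Set.uIcc (0:ℝ) 1, 0 < A + B * t := by
    intro t ht
    rw [Set.uIcc_of_le (by norm_num : (0:ℝ) ≤ 1)] at ht
    nlinarith [ht.1]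
  have hne : ∀ t ∈ Set.uIcc (0:ℝ) 1, A + B * t ≠ 0 := fun t ht => (hpos t ht).ne'
  set F : ℝ → ℝ := fun t => (Nat.factorial m : ℝ) * t ^ (m + 1) / (A * (A + B * t) ^ (m + 1))
    with hF
  have hderiv : ∀ t ∈ Set.uIcc (0:ℝ) 1,
      HasDerivAt F ((Nat.factorial (m + 1) : ℝ) * t ^ (m + 1 - 1) / (A + B * t) ^ (m + 1 + 1)) t := by
    intro t ht
    have hu : A + B * t ≠ 0 := hne t ht
    have h1 : HasDerivAt (fun t : ℝ => t ^ (m + 1)) ((m + 1 : ℕ) * t ^ m) t := by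
      simpa using hasDerivAt_pow (m + 1) t
    have h2 : HasDerivAt (fun t : ℝ => A + B * t) B t := by
      simpa using ((hasDerivAt_id t).const_mul B).const_add A
    have h3 : HasDerivAt (fun t : ℝ => A * (A + B * t) ^ (m + 1))
        (A * ((m + 1 : ℕ) * (A + B * t) ^ m * B)) t := (h2.pow (m + 1)).const_mul A
    have hd : HasDerivAt F
        ((Nat.factorial m : ℝ) * ((((m + 1 : ℕ) * t ^ m) * (A * (A + B * t) ^ (m + 1))
          - t ^ (m + 1) * (A * ((m + 1 : ℕ) * (A + B * t) ^ m * B)))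
          / (A * (A + B * t) ^ (m + 1)) ^ 2)) t := by
      simpa [hF, mul_div_assoc] using ((h1.div h3 (by positivity)).const_mul ((Nat.factorial m : ℝ)))
    convert hd using 1
    have hfac : (Nat.factorial (m + 1) : ℝ) = (m + 1) * Nat.factorial m := by
      push_cast [Nat.factorial_succ]; ring
    simp only [Nat.add_sub_cancel]
    rw [hfac]
    field_simp
    push_cast
    ring
  have hcont : IntervalIntegrable
      (fun t : ℝ => (Nat.factorial (m + 1) : ℝ) * t ^ (m + 1 - 1) / (A + B * t) ^ (m + 1 + 1))
      MeasureTheory.volume 0 1 := by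
    apply ContinuousOn.intervalIntegrable
    apply ContinuousOn.div
    · fun_prop
    · fun_prop
    · intro t ht
      exact pow_ne_zero _ (hne t ht)
  rw [intervalIntegral.integral_eq_sub_of_hasDerivAt hderiv hcont]
  have h1 : A + B * 1 = A + B := by ring
  simp only [hF, h1, Nat.succ_sub_one]
  rw [zero_pow (by omega)]
  field_simp
  ring
end

section
/- Let n ≥ 2 and let X_1, ..., X_n be indeterminates (or positive reals). For j = 1,...,n, let f_j · X = (∑_{i=1}^n X_i) − X_j. Then ∑_{J ⊆ {1,...,n}, |J| ≥ 2} (|J| − 1) · (∏_{j∈J} X_j) / (∏_{j∈J} (1 + f_j·X)) = 1 − (1 + X_1 + ⋯ + X_n)^{n−1} / ∏_{j=1}^n (1 + f_j·X). -/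
open Finset

section Aux

variable {ι : Type*} [DecidableEq ι] {F : Type*} [CommRing F]

lemma aux_sum_powerset_prod (s : Finset ι) (a : ι → F) :
    ∑ J ∈ s.powerset, ∏ j ∈ J, a j = ∏ j ∈ s, (1 + a j) := by
  rw [show ∏ j ∈ s, (1 + a j) = ∏ j ∈ s, (a j + 1) from
    Finset.prod_congr rfl fun j _ => add_comm 1 (a j), Finset.prod_add]
  simp

lemma aux_filter_mem_powerset (s : Finset ι) (j : ι) (hj : j ∈ s) :
    s.powerset.filter (fun J => j ∈ J) = ((s.erase j).powerset).image (insert j) := by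
  ext J
  simp only [mem_filter, mem_powerset, mem_image, mem_powerset]
  constructor
  · rintro ⟨hJs, hjJ⟩
    exact ⟨J.erase j, fun x hx => mem_erase.2 ⟨(mem_erase.1 hx).1, hJs (mem_erase.1 hx).2⟩,
      insert_erase hjJ⟩
  · rintro ⟨K, hK, rfl⟩
    exact ⟨insert_subset hj fun x hx => (erase_subset _ _) (hK hx), mem_insert_self _ _⟩

lemma aux_sum_card_mul_prod (s : Finset ι) (a : ι → F) :
    ∑ J ∈ s.powerset, (J.card : F) * ∏ j ∈ J, a j
      = ∑ j ∈ s, a j * ∏ i ∈ s.erase j, (1 + a i) := by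
  have h1 : ∀ J ∈ s.powerset, (J.card : F) * ∏ j ∈ J, a j
      = ∑ j ∈ s, (if j ∈ J then ∏ i ∈ J, a i else 0) := by
    intro J hJ
    rw [Finset.sum_ite_mem, Finset.inter_eq_right.2 (mem_powerset.1 hJ), Finset.sum_const,
      nsmul_eq_mul]
  rw [Finset.sum_congr rfl h1, Finset.sum_comm]
  refine Finset.sum_congr rfl fun j hj => ?_
  rw [← Finset.sum_filter, aux_filter_mem_powerset s j hj,
    Finset.sum_image (fun K hK K' hK' h => by
      have hK0 : j ∉ K := fun hc => (mem_erase.1 (mem_powerset.1 hK hc)).1 rfl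
      have hK0' : j ∉ K' := fun hc => (mem_erase.1 (mem_powerset.1 hK' hc)).1 rfl
      rw [← Finset.erase_insert hK0, h, Finset.erase_insert hK0'])]
  rw [← aux_sum_powerset_prod (s.erase j) a, Finset.mul_sum]
  refine Finset.sum_congr rfl fun K hK => ?_
  rw [Finset.prod_insert (fun hc => (mem_erase.1 (mem_powerset.1 hK hc)).1 rfl)]

end Aux

theorem rational_identity (n : ℕ) (hn : 2 ≤ n) (F : Type*) [Field F]
    (X : Fin n → F) (hden : ∀ j, (1 + (∑ i, X i) - X j) ≠ 0) :
    ∑ J ∈ Finset.univ.powerset.filter (fun J : Finset (Fin n) => 2 ≤ J.card),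
      ((J.card : F) - 1) * (∏ j ∈ J, X j) / (∏ j ∈ J, (1 + (∑ i, X i) - X j))
    = 1 - (1 + ∑ i, X i) ^ (n - 1) / ∏ j, (1 + (∑ i, X i) - X j) := by
  classical
  set S : F := ∑ i, X i with hS
  set D : Fin n → F := fun j => 1 + S - X j with hD
  set a : Fin n → F := fun j => X j / D j with ha
  have hP : ∏ j, D j ≠ 0 := Finset.prod_ne_zero_iff.2 fun j _ => hden j
  have hone : ∀ j, 1 + a j = (1 + S) / D j := by
    intro j
    have := hden j
    simp only [ha]
    rw [eq_div_iff (show D j ≠ 0 from this), add_mul, div_mul_cancel₀ _ (show D j ≠ 0 from this)]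
    simp only [hD]
    ring
  have hcard : ∀ j : Fin n, (Finset.univ.erase j).card = n - 1 := by
    intro j
    rw [Finset.card_erase_of_mem (Finset.mem_univ j), Finset.card_univ, Fintype.card_fin]
  have hterm : ∀ j, a j * ∏ i ∈ Finset.univ.erase j, (1 + a i)
      = X j * (1 + S) ^ (n - 1) / ∏ i, D i := by
    intro j
    rw [Finset.prod_congr rfl fun i _ => hone i, Finset.prod_div_distrib, Finset.prod_const,
      hcard j, ← Finset.mul_prod_erase Finset.univ D (Finset.mem_univ j)]
    have hpe : ∏ i ∈ Finset.univ.erase j, D i ≠ 0 :=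
      Finset.prod_ne_zero_iff.2 fun i _ => hden i
    have := hden j
    field_simp [ha]
    simp only [ha]
    ring
  have hprod1 : ∏ j, (1 + a j) = (1 + S) ^ n / ∏ j, D j := by
    rw [Finset.prod_congr rfl fun i _ => hone i, Finset.prod_div_distrib, Finset.prod_const,
      Finset.card_univ, Fintype.card_fin]
  have key : ∑ J ∈ (Finset.univ : Finset (Fin n)).powerset, ((J.card : F) - 1) * ∏ j ∈ J, a j
      = (∑ j, X j * (1 + S) ^ (n - 1) / ∏ i, D i) - (1 + S) ^ n / ∏ j, D j := by
    simp_rw [sub_mul, one_mul]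
    rw [Finset.sum_sub_distrib, aux_sum_card_mul_prod, aux_sum_powerset_prod, hprod1]
    exact congrArg₂ _ (Finset.sum_congr rfl fun j _ => hterm j) rfl
  have hf : ∀ J : Finset (Fin n),
      ((J.card : F) - 1) * (∏ j ∈ J, X j) / (∏ j ∈ J, (1 + S - X j))
        = ((J.card : F) - 1) * ∏ j ∈ J, a j := by
    intro J
    rw [mul_div_assoc, ha]
    congr 1
    rw [Finset.prod_div_distrib]
  have hnot : ∑ J ∈ Finset.univ.powerset.filter (fun J : Finset (Fin n) => ¬ 2 ≤ J.card),
      ((J.card : F) - 1) * ∏ j ∈ J, a j = -1 := by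
    have hcongr : ∀ J ∈ Finset.univ.powerset.filter (fun J : Finset (Fin n) => ¬ 2 ≤ J.card),
        ((J.card : F) - 1) * ∏ j ∈ J, a j = if J = (∅ : Finset (Fin n)) then -1 else 0 := by
      intro J hJ
      have hle : J.card ≤ 1 := by
        have := (Finset.mem_filter.1 hJ).2
        omega
      by_cases hJe : J = ∅
      · subst hJe; simp
      · have h1 : J.card = 1 := by
          have := Finset.card_pos.2 (Finset.nonempty_of_ne_empty hJe)
          omega
        simp [hJe, h1]
    rw [Finset.sum_congr rfl hcongr, Finset.sum_ite_eq' _ (∅ : Finset (Fin n))]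
    simp
  have hsplit := Finset.sum_filter_add_sum_filter_not
    (Finset.univ : Finset (Fin n)).powerset (fun J => 2 ≤ J.card)
    (fun J : Finset (Fin n) => ((J.card : F) - 1) * ∏ j ∈ J, a j)
  have hf' : ∀ J : Finset (Fin n), ((J.card : F) - 1) * (∏ j ∈ J, X j) / J.prod D
      = ((J.card : F) - 1) * ∏ j ∈ J, a j := hf
  simp_rw [hf']
  have hgoal : ∑ J ∈ Finset.univ.powerset.filter (fun J : Finset (Fin n) => 2 ≤ J.card),
      ((J.card : F) - 1) * ∏ j ∈ J, a j
      = (∑ j, X j * (1 + S) ^ (n - 1) / ∏ i, D i) - (1 + S) ^ n / ∏ j, D j + 1 := by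
    rw [← key, ← hsplit, hnot]; ring
  rw [hgoal]
  have hsum : ∑ j, X j * (1 + S) ^ (n - 1) / ∏ i, D i = S * (1 + S) ^ (n - 1) / ∏ i, D i := by
    rw [← Finset.sum_div, ← Finset.sum_mul, ← hS]
  rw [hsum]
  have hpow : (1 + S) ^ n = (1 + S) ^ (n - 1) * (1 + S) := by
    rw [← pow_succ, Nat.sub_add_cancel (le_trans one_le_two hn)]
  rw [hpow]
  field_simp
  ring
end

section
/- For real numbers m > 0 and X_1, X_2 > 0, the integral over the triangle T with vertices (0,0), (0,m), (m,0) of 2 X_1 X_2 / (1 + a_1 X_1 + a_2 X_2)^3 da_1 da_2 equals m^2 X_1 X_2 / ((1 + m X_1)(1 + m X_2)). -/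
open MeasureTheory Set

lemma hasDerivAt_aux1 (k c d x : ℝ) (h : c + x * d ≠ 0) :
    HasDerivAt (fun t => k / (c + t * d)) (-(k * d) / (c + x * d) ^ 2) x := by
  have h1 : HasDerivAt (fun t : ℝ => c + t * d) d x := by
    simpa using ((hasDerivAt_id x).mul_const d).const_add c
  have h3 := (h1.inv h).const_mul k
  simp only [div_eq_mul_inv]
  refine h3.congr_deriv ?_
  simp [div_eq_mul_inv]
  ring

lemma hasDerivAt_aux2 (k c d x : ℝ) (h : c + x * d ≠ 0) :
    HasDerivAt (fun t => k / (c + t * d) ^ 2) (-(2 * k * d) / (c + x * d) ^ 3) x := by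
  have h1 : HasDerivAt (fun t : ℝ => c + t * d) d x := by
    simpa using ((hasDerivAt_id x).mul_const d).const_add c
  have h3 := ((h1.pow 2).inv (pow_ne_zero 2 h)).const_mul k
  simp only [div_eq_mul_inv]
  refine h3.congr_deriv ?_
  simp only [Pi.pow_apply]
  field_simp
  ring

theorem key (m X₁ X₂ : ℝ) (hm : 0 < m) (hX₁ : 0 < X₁) (hX₂ : 0 < X₂) :
    ∫ p : ℝ × ℝ in {p | 0 ≤ p.1 ∧ 0 ≤ p.2 ∧ p.1 + p.2 ≤ m},
      2 * X₁ * X₂ / (1 + p.1 * X₁ + p.2 * X₂) ^ 3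
    = m ^ 2 * X₁ * X₂ / ((1 + m * X₁) * (1 + m * X₂)) := by
  set S : Set (ℝ × ℝ) := {p | 0 ≤ p.1 ∧ 0 ≤ p.2 ∧ p.1 + p.2 ≤ m} with hS
  set f : ℝ × ℝ → ℝ := fun p => 2 * X₁ * X₂ / (1 + p.1 * X₁ + p.2 * X₂) ^ 3 with hf
  have hSclosed : IsClosed S := by
    apply IsClosed.inter (isClosed_le continuous_const continuous_fst)
    exact IsClosed.inter (isClosed_le continuous_const continuous_snd)
      (isClosed_le (continuous_fst.add continuous_snd) continuous_const)
  have hSmeas : MeasurableSet S := hSclosed.measurableSet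
  have hScomp : IsCompact S := by
    refine IsCompact.of_isClosed_subset
      ((isCompact_Icc (a := (0:ℝ)) (b := m)).prod (isCompact_Icc (a := (0:ℝ)) (b := m)))
      hSclosed fun p hp => ?_
    obtain ⟨h1, h2, h3⟩ := hp
    exact ⟨⟨h1, by linarith⟩, ⟨h2, by linarith⟩⟩
  have hpos : ∀ p ∈ S, (0:ℝ) < 1 + p.1 * X₁ + p.2 * X₂ := by
    rintro p ⟨h1, h2, _⟩
    nlinarith [mul_nonneg h1 hX₁.le, mul_nonneg h2 hX₂.le]
  have hcont : ContinuousOn f S := by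
    apply continuousOn_const.div
    · exact (Continuous.continuousOn (by fun_prop))
    · exact fun p hp => pow_ne_zero _ (hpos p hp).ne'
  have hInt : IntegrableOn f S := hcont.integrableOn_compact hScomp
  have hInd : Integrable (S.indicator f) (volume.prod volume) := by
    rw [← Measure.volume_eq_prod]
    exact (integrable_indicator_iff hSmeas).mpr hInt
  rw [← integral_indicator hSmeas, Measure.volume_eq_prod, integral_prod _ hInd]
  set V : ℝ → ℝ := fun x => X₁ / (1 + x * X₁) ^ 2 - X₁ / (1 + x * X₁ + (m - x) * X₂) ^ 2
    with hV
  have hinner : ∀ x : ℝ, (∫ y, S.indicator f (x, y)) = (Icc 0 m).indicator V x := by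
    intro x
    by_cases hx0 : 0 ≤ x
    · by_cases hxm : x ≤ m
      · have hmem : ∀ y : ℝ, (x, y) ∈ S ↔ y ∈ Icc 0 (m - x) := by
          intro y
          constructor
          · rintro ⟨_, h2, h3⟩; exact ⟨h2, by simpa using by linarith⟩
          · rintro ⟨h2, h3⟩; exact ⟨hx0, h2, by simp at h3 ⊢; linarith⟩
        have hset : (fun y => S.indicator f (x, y))
            = (Icc 0 (m - x)).indicator (fun y => f (x, y)) := by
          funext y
          rw [Set.indicator_apply, Set.indicator_apply, if_congr (hmem y) rfl rfl]
        rw [hset, integral_indicator measurableSet_Icc,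
          integral_Icc_eq_integral_Ioc, ← intervalIntegral.integral_of_le (by linarith)]
        rw [Set.indicator_of_mem (mem_Icc.mpr ⟨hx0, hxm⟩)]
        have hden : ∀ y ∈ uIcc (0:ℝ) (m - x), (0:ℝ) < 1 + x * X₁ + y * X₂ := by
          intro y hy
          rw [uIcc_of_le (by linarith)] at hy
          nlinarith [mul_nonneg hx0 hX₁.le, mul_nonneg hy.1 hX₂.le]
        have heval : ∫ y in (0:ℝ)..(m - x), f (x, y)
            = (fun y => -X₁ / (1 + x * X₁ + y * X₂) ^ 2) (m - x)
              - (fun y => -X₁ / (1 + x * X₁ + y * X₂) ^ 2) 0 := by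
          apply intervalIntegral.integral_eq_sub_of_hasDerivAt
            (f := fun y => -X₁ / (1 + x * X₁ + y * X₂) ^ 2) (f' := fun y => f (x, y))
          · intro y hy
            have := hasDerivAt_aux2 (-X₁) (1 + x * X₁) X₂ y (hden y hy).ne'
            refine this.congr_deriv ?_
            ring
          · apply ContinuousOn.intervalIntegrable
            apply continuousOn_const.div (Continuous.continuousOn (by fun_prop))
            exact fun y hy => pow_ne_zero _ (hden y hy).ne'
        rw [heval, hV]
        simp only []
        ring
      · have hzero : (fun y => S.indicator f (x, y)) = fun _ => (0:ℝ) := by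
          funext y
          apply Set.indicator_of_notMem
          rintro ⟨_, h2, h3⟩
          simp only at h2 h3
          linarith
        rw [hzero, integral_zero, Set.indicator_of_notMem]
        simp [mem_Icc]
        intro h; linarith
    · have hzero : (fun y => S.indicator f (x, y)) = fun _ => (0:ℝ) := by
        funext y
        apply Set.indicator_of_notMem
        rintro ⟨h1, _, _⟩
        simp only at h1
        exact hx0 h1
      rw [hzero, integral_zero, Set.indicator_of_notMem]
      simp [mem_Icc]
      intro h; linarith
  rw [funext hinner, integral_indicator measurableSet_Icc,
    integral_Icc_eq_integral_Ioc, ← intervalIntegral.integral_of_le hm.le]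
  have hden1 : ∀ x ∈ uIcc (0:ℝ) m, (0:ℝ) < 1 + x * X₁ := by
    intro x hx; rw [uIcc_of_le hm.le] at hx
    nlinarith [mul_nonneg hx.1 hX₁.le]
  have hden2 : ∀ x ∈ uIcc (0:ℝ) m, (0:ℝ) < 1 + x * X₁ + (m - x) * X₂ := by
    intro x hx; rw [uIcc_of_le hm.le] at hx
    obtain ⟨hx1, hx2⟩ := hx
    nlinarith [mul_nonneg hx1 hX₁.le, mul_nonneg (by linarith : (0:ℝ) ≤ m - x) hX₂.le]
  have hVint : IntervalIntegrable V volume 0 m := by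
    apply ContinuousOn.intervalIntegrable
    apply ContinuousOn.sub
    · exact continuousOn_const.div (by fun_prop) fun x hx => pow_ne_zero _ (hden1 x hx).ne'
    · exact continuousOn_const.div (by fun_prop) fun x hx => pow_ne_zero _ (hden2 x hx).ne'
  have hne1 : (1:ℝ) + m * X₁ ≠ 0 := by nlinarith
  have hne2 : (1:ℝ) + m * X₂ ≠ 0 := by nlinarith
  by_cases hXeq : X₁ = X₂
  · subst hXeq
    have heval : ∫ x in (0:ℝ)..m, V x
        = (fun x => -1 / (1 + x * X₁) + x * (-(X₁ / (1 + m * X₁) ^ 2))) m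
          - (fun x => -1 / (1 + x * X₁) + x * (-(X₁ / (1 + m * X₁) ^ 2))) 0 := by
      apply intervalIntegral.integral_eq_sub_of_hasDerivAt (f' := V)
        (f := fun x => -1 / (1 + x * X₁) + x * (-(X₁ / (1 + m * X₁) ^ 2)))
      · intro x hx
        have h1 := hasDerivAt_aux1 (-1) 1 X₁ x (hden1 x hx).ne'
        have h2 : HasDerivAt (fun t : ℝ => t * (-(X₁ / (1 + m * X₁) ^ 2)))
            (-(X₁ / (1 + m * X₁) ^ 2)) x := by
          simpa using (hasDerivAt_id x).mul_const (-(X₁ / (1 + m * X₁) ^ 2))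
        refine (h1.add h2).congr_deriv ?_
        simp only [hV]
        rw [show 1 + x * X₁ + (m - x) * X₁ = 1 + m * X₁ from by ring]
        ring
      · exact hVint
    rw [heval]
    field_simp
    ring
  · have hne3 : X₁ - X₂ ≠ 0 := sub_ne_zero.mpr hXeq
    have heval : ∫ x in (0:ℝ)..m, V x
        = (fun x => -1 / (1 + x * X₁) + (X₁ / (X₁ - X₂)) / (1 + m * X₂ + x * (X₁ - X₂))) m
          - (fun x => -1 / (1 + x * X₁) + (X₁ / (X₁ - X₂)) / (1 + m * X₂ + x * (X₁ - X₂))) 0 := by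
      apply intervalIntegral.integral_eq_sub_of_hasDerivAt (f' := V)
        (f := fun x => -1 / (1 + x * X₁) + (X₁ / (X₁ - X₂)) / (1 + m * X₂ + x * (X₁ - X₂)))
      · intro x hx
        have h1 := hasDerivAt_aux1 (-1) 1 X₁ x (hden1 x hx).ne'
        have hne4 : 1 + m * X₂ + x * (X₁ - X₂) ≠ 0 := by
          rw [show 1 + m * X₂ + x * (X₁ - X₂) = 1 + x * X₁ + (m - x) * X₂ from by ring]
          exact (hden2 x hx).ne'
        have h2 := hasDerivAt_aux1 (X₁ / (X₁ - X₂)) (1 + m * X₂) (X₁ - X₂) x hne4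
        refine (h1.add h2).congr_deriv ?_
        simp only [hV]
        rw [show 1 + x * X₁ + (m - x) * X₂ = 1 + m * X₂ + x * (X₁ - X₂) from by ring,
          div_mul_cancel₀ X₁ hne3]
        ring
      · exact hVint
    rw [heval]
    have hne4 : 1 + m * X₂ + m * (X₁ - X₂) ≠ 0 := by
      rw [show 1 + m * X₂ + m * (X₁ - X₂) = 1 + m * X₁ from by ring]
      exact hne1
    simp only [zero_mul, add_zero, mul_zero]
    field_simp
    ring

theorem triangle_integral (m X₁ X₂ : ℝ) (hm : 0 < m) (hX₁ : 0 < X₁) (hX₂ : 0 < X₂) :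
    ∫ a in {a : Fin 2 → ℝ | 0 ≤ a 0 ∧ 0 ≤ a 1 ∧ a 0 + a 1 ≤ m},
      2 * X₁ * X₂ / (1 + a 0 * X₁ + a 1 * X₂) ^ 3 ∂volume
    = m ^ 2 * X₁ * X₂ / ((1 + m * X₁) * (1 + m * X₂)) := by
  have hmp := (volume_preserving_finTwoArrow ℝ).symm
  rw [← hmp.map_eq, setIntegral_map_equiv]
  simp only [MeasurableEquiv.finTwoArrow_symm_apply, Fin.cons_zero, Fin.cons_one,
    Set.preimage_setOf_eq]
  exact key m X₁ X₂ hm hX₁ hX₂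
end

section
/- Let X_1, X_2, X_3 > 0 and let T be the triangle in ℝ^3 with vertices (0,0,0), (1,0,1), (0,1,1). Let T^{12} = {a + λ e_3 : a ∈ T, λ ≥ 0} be the infinite column over T in the e_3 direction. Then ∫_{T^{12}} 3! X_1 X_2 X_3 / (1 + a_1 X_1 + a_2 X_2 + a_3 X_3)^4 da = X_1 X_2 / ((1 + X_1 + X_3)(1 + X_2 + X_3)). -/
open MeasureTheory Set

lemma aux_cont {c d : ℝ} {n : ℕ} (h : ∀ x ∈ uIcc (0:ℝ) 1, 0 < c + x*d) :
    IntervalIntegrable (fun s => ((c + s*d)^n)⁻¹) volume 0 1 := by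
  apply ContinuousOn.intervalIntegrable
  apply ContinuousOn.inv₀
  · exact ((continuous_const.add (continuous_id.mul continuous_const)).pow n).continuousOn
  · exact fun x hx => pow_ne_zero _ (h x hx).ne'

lemma aux_pos {c d : ℝ} (hc : 0 < c) (hcd : 0 < c + d) {x : ℝ} (hx : x ∈ uIcc (0:ℝ) 1) :
    0 < c + x*d := by
  rw [uIcc_of_le (by norm_num : (0:ℝ) ≤ 1), mem_Icc] at hx
  rcases le_or_gt 0 d with h|h <;> nlinarith [hx.1, hx.2]

lemma aux_pow2 (c d : ℝ) (hc : 0 < c) (hcd : 0 < c + d) :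
    IntervalIntegrable (fun s => ((c + s*d)^2)⁻¹) volume 0 1 ∧
    ∫ s in (0:ℝ)..1, ((c + s*d)^2)⁻¹ = (c*(c+d))⁻¹ := by
  have hii := aux_cont (n := 2) (fun x hx => aux_pos hc hcd hx)
  refine ⟨hii, ?_⟩
  rcases eq_or_ne d 0 with rfl|hd
  · simp only [mul_zero, add_zero]
    rw [intervalIntegral.integral_const]
    field_simp [hc.ne']
    simp [hc.ne']
  · have hder : ∀ x ∈ uIcc (0:ℝ) 1,
        HasDerivAt (fun s => -(d⁻¹) * (c + s*d)⁻¹) (((c + x*d)^2)⁻¹) x := by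
      intro x hx
      have hpos := aux_pos hc hcd hx
      have h1 : HasDerivAt (fun s : ℝ => c + s*d) d x := by
        simpa using (hasDerivAt_mul_const d).const_add c
      have h2 := (h1.inv hpos.ne').const_mul (-(d⁻¹))
      refine h2.congr_deriv ?_
      field_simp
    rw [intervalIntegral.integral_eq_sub_of_hasDerivAt hder hii]
    have h1 : c + 1*d = c + d := by ring
    rw [h1]
    field_simp [hc.ne', hcd.ne']
    ring

lemma aux_pow3 (c d b : ℝ) (hc : 0 < c) (hd : 0 < d) (hb : 0 ≤ b) :
    IntervalIntegrable (fun t => ((c + t*d)^3)⁻¹) volume 0 b ∧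
    ∫ t in (0:ℝ)..b, ((c + t*d)^3)⁻¹ = ((c^2)⁻¹ - ((c + b*d)^2)⁻¹)/(2*d) := by
  have hpos : ∀ x ∈ uIcc (0:ℝ) b, 0 < c + x*d := by
    intro x hx
    rw [uIcc_of_le hb, mem_Icc] at hx
    nlinarith [hx.1]
  have hii : IntervalIntegrable (fun t => ((c + t*d)^3)⁻¹) volume 0 b := by
    apply ContinuousOn.intervalIntegrable
    apply ContinuousOn.inv₀
    · exact ((continuous_const.add (continuous_id.mul continuous_const)).pow 3).continuousOn
    · exact fun x hx => pow_ne_zero _ (hpos x hx).ne'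
  refine ⟨hii, ?_⟩
  have hder : ∀ x ∈ uIcc (0:ℝ) b,
      HasDerivAt (fun t => -(2*d)⁻¹ * ((c + t*d)^2)⁻¹) (((c + x*d)^3)⁻¹) x := by
    intro x hx
    have hp := hpos x hx
    have h1 : HasDerivAt (fun t : ℝ => c + t*d) d x := by
      simpa using (hasDerivAt_mul_const d).const_add c
    have h2 := ((h1.pow 2).inv (pow_ne_zero 2 hp.ne')).const_mul (-(2*d)⁻¹)
    refine h2.congr_deriv ?_
    norm_num [Pi.pow_apply]
    field_simp [hp.ne', hd.ne']
  rw [intervalIntegral.integral_eq_sub_of_hasDerivAt hder hii]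
  field_simp
  ring

noncomputable def Gf (X₁ X₂ X₃ : ℝ) (p : ℝ × ℝ × ℝ) : ℝ :=
  6*(X₁*X₂*X₃)/(1 + p.1*X₁ + p.2.1*X₂ + p.2.2*X₃)^4

noncomputable def Ff (X₁ X₂ X₃ : ℝ) (p : ℝ × ℝ × ℝ) : ℝ :=
  if 0 ≤ p.1 ∧ 0 ≤ p.2.1 ∧ p.1 + p.2.1 ≤ 1 ∧ p.1 + p.2.1 ≤ p.2.2 then Gf X₁ X₂ X₃ p else 0

noncomputable def F1 (X₁ X₂ X₃ : ℝ) (s t : ℝ) : ℝ :=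
  if 0 ≤ s ∧ 0 ≤ t ∧ s + t ≤ 1 then 2*(X₁*X₂)*(((1+s*(X₁+X₃)) + t*(X₂+X₃))^3)⁻¹ else 0

noncomputable def F2 (X₁ X₂ X₃ : ℝ) (s : ℝ) : ℝ :=
  if 0 ≤ s ∧ s ≤ 1 then
    (X₁*X₂/(X₂+X₃)) * (((1 + s*(X₁+X₃))^2)⁻¹ - (((1+X₂+X₃) + s*(X₁-X₂))^2)⁻¹)
  else 0

variable {X₁ X₂ X₃ : ℝ}

lemma Ff_nonneg (hX₁ : 0 < X₁) (hX₂ : 0 < X₂) (hX₃ : 0 < X₃) (p : ℝ × ℝ × ℝ) :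
    0 ≤ Ff X₁ X₂ X₃ p := by
  unfold Ff Gf
  split
  · positivity
  · exact le_rfl

lemma measurable_Ff : Measurable (Ff X₁ X₂ X₃) := by
  unfold Ff Gf
  apply Measurable.ite
  · apply MeasurableSet.inter
    · exact measurableSet_le measurable_const measurable_fst
    apply MeasurableSet.inter
    · exact measurableSet_le measurable_const (measurable_fst.comp measurable_snd)
    apply MeasurableSet.inter
    · exact measurableSet_le (measurable_fst.add (measurable_fst.comp measurable_snd)) measurable_const
    · exact measurableSet_le (measurable_fst.add (measurable_fst.comp measurable_snd))
        (measurable_snd.comp measurable_snd)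
  · apply Measurable.div measurable_const
    apply Measurable.pow _ measurable_const
    fun_prop
  · exact measurable_const

lemma intZ (hX₁ : 0 < X₁) (hX₂ : 0 < X₂) (hX₃ : 0 < X₃) (s t : ℝ) :
    Integrable (fun z => Ff X₁ X₂ X₃ (s, (t, z))) ∧
    ∫ z, Ff X₁ X₂ X₃ (s, (t, z)) = F1 X₁ X₂ X₃ s t := by
  by_cases h : 0 ≤ s ∧ 0 ≤ t ∧ s + t ≤ 1
  · obtain ⟨hs, ht, hst⟩ := h
    have hfun : (fun z => Ff X₁ X₂ X₃ (s, (t, z)))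
        = Set.indicator (Ici (s+t)) (fun z => Gf X₁ X₂ X₃ (s, (t, z))) := by
      funext z
      by_cases hz : s + t ≤ z
      · rw [Set.indicator_of_mem (mem_Ici.2 hz)]
        simp [Ff, hs, ht, hst, hz]
      · rw [Set.indicator_of_notMem (by simpa using hz)]
        simp [Ff, hz]
    have hLpos : ∀ z ∈ Ici (s+t), 0 < 1 + s*X₁ + t*X₂ + z*X₃ := by
      intro z hz
      have hz0 : 0 ≤ z := le_trans (by linarith) hz
      nlinarith [mul_nonneg hs hX₁.le, mul_nonneg ht hX₂.le, mul_nonneg hz0 hX₃.le]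
    have hder : ∀ z ∈ Ici (s+t),
        HasDerivAt (fun z => -(2*(X₁*X₂)) * ((1 + s*X₁ + t*X₂ + z*X₃)^3)⁻¹)
          (Gf X₁ X₂ X₃ (s, (t, z))) z := by
      intro z hz
      have hp := hLpos z hz
      have h1 : HasDerivAt (fun z : ℝ => 1 + s*X₁ + t*X₂ + z*X₃) X₃ z := by
        simpa using (hasDerivAt_mul_const X₃).const_add (1 + s*X₁ + t*X₂)
      have h2 := ((h1.pow 3).inv (pow_ne_zero 3 hp.ne')).const_mul (-(2*(X₁*X₂)))
      refine h2.congr_deriv ?_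
      norm_num [Pi.pow_apply]
      unfold Gf
      field_simp [hp.ne']
      ring
    have hnonneg : ∀ z ∈ Ioi (s+t), 0 ≤ Gf X₁ X₂ X₃ (s, (t, z)) := by
      intro z _
      unfold Gf
      positivity
    have htends : Filter.Tendsto (fun z => -(2*(X₁*X₂)) * ((1 + s*X₁ + t*X₂ + z*X₃)^3)⁻¹)
        Filter.atTop (nhds 0) := by
      have h1 : Filter.Tendsto (fun z : ℝ => 1 + s*X₁ + t*X₂ + z*X₃) Filter.atTop Filter.atTop := by
        apply Filter.tendsto_atTop_add_const_left
        exact Filter.Tendsto.atTop_mul_const hX₃ Filter.tendsto_id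
      have h2 : Filter.Tendsto (fun z : ℝ => ((1 + s*X₁ + t*X₂ + z*X₃)^3)⁻¹)
          Filter.atTop (nhds 0) := ((Filter.tendsto_pow_atTop (by norm_num : (3:ℕ) ≠ 0)).comp h1).inv_tendsto_atTop
      simpa using h2.const_mul (-(2*(X₁*X₂)))
    have hderiv' : ∀ z ∈ Ici (s+t),
        HasDerivAt (fun z => -(2*(X₁*X₂)) * ((1 + s*X₁ + t*X₂ + z*X₃)^3)⁻¹)
          (Gf X₁ X₂ X₃ (s, (t, z))) z := hder
    have hIntOn : IntegrableOn (fun z => Gf X₁ X₂ X₃ (s, (t, z))) (Ioi (s+t)) :=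
      integrableOn_Ioi_deriv_of_nonneg' hderiv' hnonneg htends
    have hval : ∫ z in Ioi (s+t), Gf X₁ X₂ X₃ (s, (t, z))
        = 0 - (-(2*(X₁*X₂)) * ((1 + s*X₁ + t*X₂ + (s+t)*X₃)^3)⁻¹) :=
      integral_Ioi_of_hasDerivAt_of_nonneg' hderiv' hnonneg htends
    constructor
    · rw [hfun]
      apply IntegrableOn.integrable_indicator _ measurableSet_Ici
      rwa [IntegrableOn, Measure.restrict_congr_set Ioi_ae_eq_Ici.symm]
    · rw [hfun, integral_indicator measurableSet_Ici, integral_Ici_eq_integral_Ioi, hval]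
      have heq : 1 + s*X₁ + t*X₂ + (s+t)*X₃ = (1+s*(X₁+X₃)) + t*(X₂+X₃) := by ring
      rw [heq]
      simp only [F1, if_pos (⟨hs, ht, hst⟩ : 0 ≤ s ∧ 0 ≤ t ∧ s + t ≤ 1)]
      ring
  · have hfun : (fun z => Ff X₁ X₂ X₃ (s, (t, z))) = fun _ => 0 := by
      funext z
      unfold Ff
      rw [if_neg]
      tauto
    rw [hfun]
    refine ⟨integrable_zero _ _ _, ?_⟩
    rw [integral_zero]
    unfold F1
    rw [if_neg h]
lemma intT (hX₁ : 0 < X₁) (hX₂ : 0 < X₂) (hX₃ : 0 < X₃) (s : ℝ) :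
    Integrable (F1 X₁ X₂ X₃ s) ∧ ∫ t, F1 X₁ X₂ X₃ s t = F2 X₁ X₂ X₃ s := by
  by_cases hs : 0 ≤ s ∧ s ≤ 1
  · obtain ⟨hs0, hs1⟩ := hs
    set c := 1 + s*(X₁+X₃) with hc
    have hcpos : 0 < c := by nlinarith [mul_nonneg hs0 (by linarith : (0:ℝ) ≤ X₁+X₃)]
    have hdpos : (0:ℝ) < X₂+X₃ := by linarith
    have hfun : F1 X₁ X₂ X₃ s
        = Set.indicator (Icc 0 (1-s)) (fun t => 2*(X₁*X₂)*((c + t*(X₂+X₃))^3)⁻¹) := by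
      funext t
      by_cases ht : t ∈ Icc 0 (1-s)
      · rw [Set.indicator_of_mem ht]
        obtain ⟨ht0, ht1⟩ := ht
        simp only [F1, if_pos (⟨hs0, ht0, by linarith⟩ : 0 ≤ s ∧ 0 ≤ t ∧ s + t ≤ 1)]
        rfl
      · rw [Set.indicator_of_notMem ht]
        rw [mem_Icc] at ht
        push_neg at ht
        unfold F1
        rw [if_neg]
        rintro ⟨-, h2, h3⟩
        exact absurd (by linarith : t ≤ 1 - s) (by exact fun h => absurd (ht h2) (not_lt.2 h))
    have hcont : ContinuousOn (fun t => 2*(X₁*X₂)*((c + t*(X₂+X₃))^3)⁻¹) (Icc 0 (1-s)) := by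
      apply ContinuousOn.mul continuousOn_const
      apply ContinuousOn.inv₀
      · exact ((continuous_const.add (continuous_id.mul continuous_const)).pow 3).continuousOn
      · intro t ht
        have : 0 < c + t*(X₂+X₃) := by nlinarith [ht.1]
        exact pow_ne_zero _ this.ne'
    have hIntOn : IntegrableOn (fun t => 2*(X₁*X₂)*((c + t*(X₂+X₃))^3)⁻¹) (Icc 0 (1-s)) :=
      hcont.integrableOn_Icc
    constructor
    · rw [hfun]
      exact hIntOn.integrable_indicator measurableSet_Icc
    · rw [hfun, integral_indicator measurableSet_Icc, integral_Icc_eq_integral_Ioc,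
        ← intervalIntegral.integral_of_le (by linarith : (0:ℝ) ≤ 1-s),
        intervalIntegral.integral_const_mul, (aux_pow3 c (X₂+X₃) (1-s) hcpos hdpos (by linarith)).2]
      have h2 : c + (1-s)*(X₂+X₃) = (1+X₂+X₃) + s*(X₁-X₂) := by rw [hc]; ring
      rw [h2]
      unfold F2
      rw [if_pos ⟨hs0, hs1⟩]
      field_simp
      ring
  · have hfun : F1 X₁ X₂ X₃ s = fun _ => 0 := by
      funext t
      unfold F1
      rw [if_neg]
      rintro ⟨h1, h2, h3⟩
      exact hs ⟨h1, by linarith⟩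
    rw [hfun]
    refine ⟨integrable_zero _ _ _, ?_⟩
    rw [integral_zero]
    unfold F2
    rw [if_neg hs]

lemma intS (hX₁ : 0 < X₁) (hX₂ : 0 < X₂) (hX₃ : 0 < X₃) :
    Integrable (F2 X₁ X₂ X₃) ∧
    ∫ s, F2 X₁ X₂ X₃ s = X₁ * X₂ / ((1 + X₁ + X₃) * (1 + X₂ + X₃)) := by
  have h13 : (0:ℝ) < 1 + X₁ + X₃ := by linarith
  have h23 : (0:ℝ) < 1 + X₂ + X₃ := by linarith
  have hfun : F2 X₁ X₂ X₃ = Set.indicator (Icc 0 1)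
      (fun s => (X₁*X₂/(X₂+X₃)) * (((1 + s*(X₁+X₃))^2)⁻¹ - (((1+X₂+X₃) + s*(X₁-X₂))^2)⁻¹)) := by
    funext s
    by_cases hs : s ∈ Icc (0:ℝ) 1
    · rw [Set.indicator_of_mem hs]
      exact if_pos hs
    · rw [Set.indicator_of_notMem hs]
      exact if_neg (by rwa [mem_Icc] at hs)
  have hpos1 : ∀ x ∈ Icc (0:ℝ) 1, 0 < 1 + x*(X₁+X₃) := fun x hx => by nlinarith [hx.1]
  have hpos2 : ∀ x ∈ Icc (0:ℝ) 1, 0 < (1+X₂+X₃) + x*(X₁-X₂) := by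
    intro x hx
    rcases le_or_gt 0 (X₁-X₂) with h|h <;> nlinarith [hx.1, hx.2]
  have hcont : ContinuousOn
      (fun s => (X₁*X₂/(X₂+X₃)) * (((1 + s*(X₁+X₃))^2)⁻¹ - (((1+X₂+X₃) + s*(X₁-X₂))^2)⁻¹))
      (Icc 0 1) := by
    apply ContinuousOn.mul continuousOn_const
    apply ContinuousOn.sub
    · apply ContinuousOn.inv₀
        ((continuous_const.add (continuous_id.mul continuous_const)).pow 2).continuousOn
      exact fun x hx => pow_ne_zero _ (hpos1 x hx).ne'
    · apply ContinuousOn.inv₀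
        ((continuous_const.add (continuous_id.mul continuous_const)).pow 2).continuousOn
      exact fun x hx => pow_ne_zero _ (hpos2 x hx).ne'
  constructor
  · rw [hfun]
    exact hcont.integrableOn_Icc.integrable_indicator measurableSet_Icc
  · rw [hfun, integral_indicator measurableSet_Icc, integral_Icc_eq_integral_Ioc,
      ← intervalIntegral.integral_of_le (by norm_num : (0:ℝ) ≤ 1),
      intervalIntegral.integral_const_mul]
    have ha := aux_pow2 1 (X₁+X₃) one_pos (by linarith)
    have hb := aux_pow2 (1+X₂+X₃) (X₁-X₂) h23 (by rw [show 1+X₂+X₃+(X₁-X₂) = 1+X₁+X₃ by ring]; exact h13)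
    rw [intervalIntegral.integral_sub ha.1 hb.1, ha.2, hb.2]
    rw [show 1+X₂+X₃+(X₁-X₂) = 1+X₁+X₃ by ring]
    field_simp
    ring
lemma intQ (hX₁ : 0 < X₁) (hX₂ : 0 < X₂) (hX₃ : 0 < X₃) (s : ℝ) :
    Integrable (fun q : ℝ × ℝ => Ff X₁ X₂ X₃ (s, q)) ∧
    ∫ q : ℝ × ℝ, Ff X₁ X₂ X₃ (s, q) = F2 X₁ X₂ X₃ s := by
  have hmeas : AEStronglyMeasurable (fun q : ℝ × ℝ => Ff X₁ X₂ X₃ (s, q))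
      ((volume : Measure ℝ).prod (volume : Measure ℝ)) :=
    (measurable_Ff.comp measurable_prodMk_left).aestronglyMeasurable
  have hnorm : ∀ t : ℝ, (∫ z, ‖Ff X₁ X₂ X₃ (s, (t, z))‖) = F1 X₁ X₂ X₃ s t := by
    intro t
    rw [show (fun z => ‖Ff X₁ X₂ X₃ (s, (t, z))‖) = fun z => Ff X₁ X₂ X₃ (s, (t, z)) from
      funext fun z => Real.norm_of_nonneg (Ff_nonneg hX₁ hX₂ hX₃ _)]
    exact (intZ hX₁ hX₂ hX₃ s t).2
  have hInt : Integrable (fun q : ℝ × ℝ => Ff X₁ X₂ X₃ (s, q))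
      ((volume : Measure ℝ).prod (volume : Measure ℝ)) := by
    rw [integrable_prod_iff hmeas]
    refine ⟨Filter.Eventually.of_forall fun t => (intZ hX₁ hX₂ hX₃ s t).1, ?_⟩
    rw [show (fun t => ∫ z, ‖Ff X₁ X₂ X₃ (s, (t, z))‖) = F1 X₁ X₂ X₃ s from funext hnorm]
    exact (intT hX₁ hX₂ hX₃ s).1
  have hvol : (volume : Measure (ℝ × ℝ)) = (volume : Measure ℝ).prod (volume : Measure ℝ) :=
    rfl
  constructor
  · rw [hvol]; exact hInt
  · rw [hvol, MeasureTheory.integral_prod _ hInt]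
    rw [show (fun t => ∫ z, Ff X₁ X₂ X₃ (s, (t, z))) = F1 X₁ X₂ X₃ s from
      funext fun t => (intZ hX₁ hX₂ hX₃ s t).2]
    exact (intT hX₁ hX₂ hX₃ s).2

lemma intP (hX₁ : 0 < X₁) (hX₂ : 0 < X₂) (hX₃ : 0 < X₃) :
    ∫ p : ℝ × ℝ × ℝ, Ff X₁ X₂ X₃ p = X₁ * X₂ / ((1 + X₁ + X₃) * (1 + X₂ + X₃)) := by
  have hmeas : AEStronglyMeasurable (Ff X₁ X₂ X₃)
      ((volume : Measure ℝ).prod (volume : Measure (ℝ × ℝ))) :=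
    measurable_Ff.aestronglyMeasurable
  have hnorm : ∀ s : ℝ, (∫ q : ℝ × ℝ, ‖Ff X₁ X₂ X₃ (s, q)‖) = F2 X₁ X₂ X₃ s := by
    intro s
    rw [show (fun q : ℝ × ℝ => ‖Ff X₁ X₂ X₃ (s, q)‖) = fun q => Ff X₁ X₂ X₃ (s, q) from
      funext fun q => Real.norm_of_nonneg (Ff_nonneg hX₁ hX₂ hX₃ _)]
    exact (intQ hX₁ hX₂ hX₃ s).2
  have hInt : Integrable (Ff X₁ X₂ X₃)
      ((volume : Measure ℝ).prod (volume : Measure (ℝ × ℝ))) := by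
    rw [integrable_prod_iff hmeas]
    constructor
    · exact Filter.Eventually.of_forall fun s => (intQ hX₁ hX₂ hX₃ s).1
    · rw [show (fun s => ∫ q : ℝ × ℝ, ‖Ff X₁ X₂ X₃ (s, q)‖) = F2 X₁ X₂ X₃ from funext hnorm]
      exact (intS hX₁ hX₂ hX₃).1
  have hvol : (volume : Measure (ℝ × ℝ × ℝ)) = (volume : Measure ℝ).prod (volume : Measure (ℝ × ℝ)) := rfl
  rw [hvol, MeasureTheory.integral_prod _ hInt]
  rw [show (fun s => ∫ q : ℝ × ℝ, Ff X₁ X₂ X₃ (s, q)) = F2 X₁ X₂ X₃ from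
    funext fun s => (intQ hX₁ hX₂ hX₃ s).2]
  exact (intS hX₁ hX₂ hX₃).2

lemma set_eq : {x : Fin 3 → ℝ | ∃ b ∈ convexHull ℝ
        {(![0, 0, 0] : Fin 3 → ℝ), ![1, 0, 1], ![0, 1, 1]},
        ∃ l : ℝ, 0 ≤ l ∧ x = b + l • (![0, 0, 1] : Fin 3 → ℝ)}
    = {x : Fin 3 → ℝ | 0 ≤ x 0 ∧ 0 ≤ x 1 ∧ x 0 + x 1 ≤ 1 ∧ x 0 + x 1 ≤ x 2} := by
  ext x
  simp only [mem_setOf_eq]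
  constructor
  · rintro ⟨b, hb, l, hl, rfl⟩
    rw [convexHull_insert (insert_nonempty _ _), convexHull_pair] at hb
    rw [mem_convexJoin] at hb
    obtain ⟨u, hu, z, hz, hbz⟩ := hb
    rw [mem_singleton_iff] at hu
    subst hu
    obtain ⟨a, a', ha, ha', haa, rfl⟩ := hz
    obtain ⟨c, c', hc, hc', hcc, rfl⟩ := hbz
    simp only [Pi.add_apply, Pi.smul_apply, smul_eq_mul, Matrix.cons_val_zero,
      Matrix.cons_val_one, Matrix.head_cons, Matrix.cons_val_two, Matrix.tail_cons]
    refine ⟨by nlinarith, by nlinarith, by nlinarith, by nlinarith⟩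
  · rintro ⟨h0, h1, hsum, hz⟩
    refine ⟨(1 - x 0 - x 1) • (![0,0,0] : Fin 3 → ℝ) + x 0 • ![1,0,1] + x 1 • ![0,1,1], ?_,
      x 2 - (x 0 + x 1), by linarith, ?_⟩
    · have hcvx := convex_convexHull ℝ ({(![0, 0, 0] : Fin 3 → ℝ), ![1, 0, 1], ![0, 1, 1]} : Set (Fin 3 → ℝ))
      have m0 : (![0,0,0] : Fin 3 → ℝ) ∈ convexHull ℝ {(![0, 0, 0] : Fin 3 → ℝ), ![1, 0, 1], ![0, 1, 1]} :=
        subset_convexHull ℝ _ (by simp)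
      have m1 : (![1,0,1] : Fin 3 → ℝ) ∈ convexHull ℝ {(![0, 0, 0] : Fin 3 → ℝ), ![1, 0, 1], ![0, 1, 1]} :=
        subset_convexHull ℝ _ (by simp)
      have m2 : (![0,1,1] : Fin 3 → ℝ) ∈ convexHull ℝ {(![0, 0, 0] : Fin 3 → ℝ), ![1, 0, 1], ![0, 1, 1]} :=
        subset_convexHull ℝ _ (by simp)
      have hmem := hcvx.sum_mem (t := (Finset.univ : Finset (Fin 3)))
        (w := ![1 - x 0 - x 1, x 0, x 1])
        (z := ![![0,0,0], ![1,0,1], ![0,1,1]])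
        (fun i _ => by fin_cases i <;> simp <;> linarith)
        (by simp [Fin.sum_univ_three]; ring)
        (fun i _ => by fin_cases i <;> simpa using by first | exact m0 | exact m1 | exact m2)
      simpa [Fin.sum_univ_three] using hmem
    · funext i
      fin_cases i <;>
        simp [Matrix.cons_val_zero, Matrix.cons_val_one, Matrix.head_cons]
theorem column_example (X₁ X₂ X₃ : ℝ) (hX₁ : 0 < X₁) (hX₂ : 0 < X₂) (hX₃ : 0 < X₃) :
    ∫ a in {x : Fin 3 → ℝ | ∃ b ∈ convexHull ℝ
        {(![0, 0, 0] : Fin 3 → ℝ), ![1, 0, 1], ![0, 1, 1]},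
        ∃ l : ℝ, 0 ≤ l ∧ x = b + l • (![0, 0, 1] : Fin 3 → ℝ)},
      (Nat.factorial 3 : ℝ) * (X₁ * X₂ * X₃) /
        (1 + a 0 * X₁ + a 1 * X₂ + a 2 * X₃) ^ 4 ∂volume
    = X₁ * X₂ / ((1 + X₁ + X₃) * (1 + X₂ + X₃)) := by
  rw [set_eq]
  have hmeasS : MeasurableSet {x : Fin 3 → ℝ | 0 ≤ x 0 ∧ 0 ≤ x 1 ∧ x 0 + x 1 ≤ 1 ∧ x 0 + x 1 ≤ x 2} := by
    apply MeasurableSet.inter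
    · exact measurableSet_le measurable_const (measurable_pi_apply 0)
    apply MeasurableSet.inter
    · exact measurableSet_le measurable_const (measurable_pi_apply 1)
    apply MeasurableSet.inter
    · exact measurableSet_le ((measurable_pi_apply 0).add (measurable_pi_apply 1)) measurable_const
    · exact measurableSet_le ((measurable_pi_apply 0).add (measurable_pi_apply 1)) (measurable_pi_apply 2)
  rw [← MeasureTheory.integral_indicator hmeasS]
  set e := ((MeasurableEquiv.piFinSuccAbove (fun _ : Fin 3 => ℝ) 0).trans
      (MeasurableEquiv.prodCongr (MeasurableEquiv.refl ℝ) (MeasurableEquiv.finTwoArrow))) with he_def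
  have he : MeasurePreserving e volume volume := by
    have h1 := volume_preserving_piFinSuccAbove (fun _ : Fin 3 => ℝ) 0
    have h2 := (MeasurePreserving.id (volume : Measure ℝ)).prod (volume_preserving_finTwoArrow ℝ)
    exact h2.comp h1
  have hkey : (Set.indicator {x : Fin 3 → ℝ | 0 ≤ x 0 ∧ 0 ≤ x 1 ∧ x 0 + x 1 ≤ 1 ∧ x 0 + x 1 ≤ x 2}
      (fun a => (Nat.factorial 3 : ℝ) * (X₁ * X₂ * X₃) / (1 + a 0 * X₁ + a 1 * X₂ + a 2 * X₃) ^ 4))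
      = fun x => Ff X₁ X₂ X₃ (e x) := by
    funext x
    have hex : e x = (x 0, (x 1, x 2)) := by
      simp [he_def, MeasurableEquiv.piFinSuccAbove, Fin.succAbove, MeasurableEquiv.finTwoArrow,
        MeasurableEquiv.piFinTwo, Fin.tail, MeasurableEquiv.prodCongr]
    rw [hex]
    unfold Ff Gf
    simp only [Set.indicator_apply, mem_setOf_eq]
    have h6 : (Nat.factorial 3 : ℝ) = 6 := by norm_num [Nat.factorial]
    rw [h6]
  rw [hkey]
  rw [he.integral_comp e.measurableEmbedding (Ff X₁ X₂ X₃)]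
  exact intP hX₁ hX₂ hX₃
end

section
/- For positive integers m_1,...,m_n and positive reals X_1,...,X_n, the integral over the simplex N = {(a_1,...,a_n) : a_i ≥ 0, a_1/m_1 + ⋯ + a_n/m_n ≤ 1} of n! X_1⋯X_n / (1 + a·X)^{n+1} da equals m_1⋯m_n · X_1⋯X_n / ((1 + m_1 X_1)⋯(1 + m_n X_n)). -/
open MeasureTheory Set



def simplexT {n : ℕ} (μ : Fin n → ℝ) : Set (Fin n → ℝ) :=
  {a | (∀ i, 0 ≤ a i) ∧ ∑ i, a i / μ i ≤ 1}

lemma isClosed_simplexT {n : ℕ} (μ : Fin n → ℝ) : IsClosed (simplexT μ) := by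
  have h1 : IsClosed {a : Fin n → ℝ | ∀ i, 0 ≤ a i} := by
    have : {a : Fin n → ℝ | ∀ i, 0 ≤ a i} = ⋂ i, {a | 0 ≤ a i} := by ext a; simp
    rw [this]
    exact isClosed_iInter fun i => isClosed_le continuous_const (continuous_apply i)
  have h2 : IsClosed {a : Fin n → ℝ | ∑ i, a i / μ i ≤ 1} :=
    isClosed_le (by continuity) continuous_const
  exact h1.inter h2

lemma measurableSet_simplexT {n : ℕ} (μ : Fin n → ℝ) : MeasurableSet (simplexT μ) :=
  (isClosed_simplexT μ).measurableSet

lemma isCompact_simplexT {n : ℕ} (μ : Fin n → ℝ) (hμ : ∀ i, 0 < μ i) :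
    IsCompact (simplexT μ) := by
  refine Metric.isCompact_of_isClosed_isBounded (isClosed_simplexT μ) ?_
  rw [Metric.isBounded_iff_subset_closedBall 0]
  refine ⟨∑ i, μ i, fun a ha => ?_⟩
  rw [Metric.mem_closedBall, dist_zero_right]
  rw [pi_norm_le_iff_of_nonneg (Finset.sum_nonneg fun i _ => (hμ i).le)]
  intro i
  rw [Real.norm_eq_abs, abs_of_nonneg (ha.1 i)]
  have hi : a i / μ i ≤ 1 := by
    refine le_trans ?_ ha.2
    refine Finset.single_le_sum (f := fun j => a j / μ j) (fun j _ => ?_) (Finset.mem_univ i)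
    exact div_nonneg (ha.1 j) (hμ j).le
  have : a i ≤ μ i := by
    rw [div_le_one (hμ i)] at hi; exact hi
  refine this.trans ?_
  exact Finset.single_le_sum (f := fun j => μ j) (fun j _ => (hμ j).le) (Finset.mem_univ i)

lemma pos_on_simplexT {n : ℕ} (μ X : Fin n → ℝ) (c : ℝ) (hμ : ∀ i, 0 < μ i)
    (hc : 0 < c) (hcX : ∀ i, 0 < c + μ i * X i) :
    ∀ a ∈ simplexT μ, 0 < c + ∑ i, a i * X i := by
  intro a ha
  have key : c + ∑ i, a i * X i
      = (1 - ∑ i, a i / μ i) * c + ∑ i, (a i / μ i) * (c + μ i * X i) := by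
    have : ∀ i ∈ Finset.univ, (a i / μ i) * (c + μ i * X i) = (a i / μ i) * c + a i * X i := by
      intro i _
      have hne : μ i ≠ 0 := (hμ i).ne'
      field_simp
    rw [Finset.sum_congr rfl this, Finset.sum_add_distrib, ← Finset.sum_mul]
    ring
  rw [key]
  have hnn : ∀ i ∈ Finset.univ, 0 ≤ (a i / μ i) * (c + μ i * X i) := fun i _ =>
    mul_nonneg (div_nonneg (ha.1 i) (hμ i).le) (hcX i).le
  rcases lt_or_ge (∑ i, a i / μ i) 1 with hs | hs
  · have : 0 < (1 - ∑ i, a i / μ i) * c := mul_pos (by linarith) hc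
    have := Finset.sum_nonneg hnn
    linarith
  · have hspos : (0:ℝ) < ∑ i, a i / μ i := lt_of_lt_of_le one_pos hs
    have : ∃ i ∈ Finset.univ, (0:ℝ) < a i / μ i := by
      by_contra h
      push_neg at h
      have : (∑ i, a i / μ i) ≤ 0 := Finset.sum_nonpos fun i hi => h i hi
      linarith
    obtain ⟨i, _, hi⟩ := this
    have h1 : 0 < (a i / μ i) * (c + μ i * X i) := mul_pos hi (hcX i)
    have h2 : (a i / μ i) * (c + μ i * X i) ≤ ∑ j, (a j / μ j) * (c + μ j * X j) :=
      Finset.single_le_sum hnn (Finset.mem_univ i)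
    have h3 : 0 ≤ (1 - ∑ i, a i / μ i) * c := mul_nonneg (by linarith [ha.2]) hc.le
    linarith

lemma integrableOn_simplexT {n : ℕ} (μ X : Fin n → ℝ) (c C : ℝ) (p : ℕ) (hμ : ∀ i, 0 < μ i)
    (hc : 0 < c) (hcX : ∀ i, 0 < c + μ i * X i) :
    IntegrableOn (fun a : Fin n → ℝ => C / (c + ∑ i, a i * X i) ^ p) (simplexT μ) := by
  apply ContinuousOn.integrableOn_compact (isCompact_simplexT μ hμ)
  apply ContinuousOn.div continuousOn_const
  · exact (by continuity : Continuous fun a : Fin n → ℝ => (c + ∑ i, a i * X i) ^ p).continuousOn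
  · intro a ha
    exact pow_ne_zero _ (pos_on_simplexT μ X c hμ hc hcX a ha).ne'



lemma insertNth_mem_simplexT {n : ℕ} (μ : Fin (n + 1) → ℝ) (hμ : ∀ i, 0 < μ i)
    (j : Fin (n + 1)) (t : ℝ) (b : Fin n → ℝ) :
    j.insertNth t b ∈ simplexT μ ↔
      b ∈ simplexT (μ ∘ j.succAbove) ∧
        t ∈ Icc 0 (μ j * (1 - ∑ i, b i / μ (j.succAbove i))) := by
  have hM := hμ j
  simp only [simplexT, mem_setOf_eq, mem_Icc, Function.comp]
  rw [Fin.forall_iff_succAbove j,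
    Fin.sum_univ_succAbove (fun i => Fin.insertNth (α := fun _ => ℝ) j t b i / μ i) j]
  simp only [Fin.insertNth_apply_same, Fin.insertNth_apply_succAbove]
  constructor
  · rintro ⟨⟨ht, hb⟩, hsum⟩
    have hS : 0 ≤ ∑ i, b i / μ (j.succAbove i) :=
      Finset.sum_nonneg fun i _ => div_nonneg (hb i) (hμ _).le
    have htd : 0 ≤ t / μ j := div_nonneg ht hM.le
    refine ⟨⟨hb, by linarith⟩, ht, ?_⟩
    rw [mul_comm, ← div_le_iff₀ hM] at *
    linarith
  · rintro ⟨⟨hb, hbs⟩, ht, htu⟩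
    refine ⟨⟨ht, hb⟩, ?_⟩
    rw [mul_comm, ← div_le_iff₀ hM] at htu
    linarith

lemma setIntegral_simplexT_succAbove {n : ℕ} (μ : Fin (n + 1) → ℝ) (hμ : ∀ i, 0 < μ i)
    (j : Fin (n + 1)) (f : (Fin (n + 1) → ℝ) → ℝ) (hf : IntegrableOn f (simplexT μ)) :
    ∫ a in simplexT μ, f a =
      ∫ b in simplexT (μ ∘ j.succAbove),
        ∫ t in Icc 0 (μ j * (1 - ∑ i, b i / μ (j.succAbove i))), f (j.insertNth t b) := by
  have e := MeasurableEquiv.piFinSuccAbove (fun _ : Fin (n + 1) => ℝ) j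
  have hmp := (volume_preserving_piFinSuccAbove (fun _ : Fin (n + 1) => ℝ) j).symm
  have hint : Integrable ((simplexT μ).indicator f) := by
    rwa [integrable_indicator_iff (measurableSet_simplexT μ)]
  have hint2 : Integrable (fun p : ℝ × (Fin n → ℝ) =>
      (simplexT μ).indicator f ((MeasurableEquiv.piFinSuccAbove (fun _ : Fin (n + 1) => ℝ) j).symm p)) := by
    rw [← Function.comp_def,
      hmp.integrable_comp_emb (MeasurableEquiv.measurableEmbedding _)]
    exact hint
  calc ∫ a in simplexT μ, f a = ∫ a, (simplexT μ).indicator f a :=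
        (integral_indicator (measurableSet_simplexT μ)).symm
    _ = ∫ p : ℝ × (Fin n → ℝ), (simplexT μ).indicator f
          ((MeasurableEquiv.piFinSuccAbove (fun _ : Fin (n + 1) => ℝ) j).symm p) :=
        (hmp.integral_comp (MeasurableEquiv.measurableEmbedding _) _).symm
    _ = ∫ b : Fin n → ℝ, ∫ t : ℝ, (simplexT μ).indicator f
          ((MeasurableEquiv.piFinSuccAbove (fun _ : Fin (n + 1) => ℝ) j).symm (t, b)) := by
        rw [Measure.volume_eq_prod] at hint2 ⊢
        exact integral_prod_symm _ hint2
    _ = ∫ b : Fin n → ℝ, (simplexT (μ ∘ j.succAbove)).indicator (fun b =>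
          ∫ t in Icc 0 (μ j * (1 - ∑ i, b i / μ (j.succAbove i))), f (j.insertNth t b)) b := by
        refine integral_congr_ae (Filter.Eventually.of_forall fun b => ?_)
        have hsymm : ∀ t, (MeasurableEquiv.piFinSuccAbove (fun _ : Fin (n + 1) => ℝ) j).symm (t, b)
            = j.insertNth t b := by
          intro t
          simp [MeasurableEquiv.piFinSuccAbove, Fin.insertNthEquiv]
        by_cases hb : b ∈ simplexT (μ ∘ j.succAbove)
        · rw [indicator_of_mem hb, ← integral_indicator measurableSet_Icc]
          refine integral_congr_ae (Filter.Eventually.of_forall fun t => ?_)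
          simp only [hsymm]
          by_cases ht : t ∈ Icc 0 (μ j * (1 - ∑ i, b i / μ (j.succAbove i)))
          · rw [indicator_of_mem ht,
              indicator_of_mem ((insertNth_mem_simplexT μ hμ j t b).mpr ⟨hb, ht⟩)]
          · rw [indicator_of_notMem ht, indicator_of_notMem]
            intro hmem
            exact ht ((insertNth_mem_simplexT μ hμ j t b).mp hmem).2
        · rw [indicator_of_notMem hb]
          have : ∀ t : ℝ, (simplexT μ).indicator f
              ((MeasurableEquiv.piFinSuccAbove (fun _ : Fin (n + 1) => ℝ) j).symm (t, b)) = 0 := by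
            intro t
            simp only [hsymm]
            apply indicator_of_notMem
            intro hmem
            exact hb ((insertNth_mem_simplexT μ hμ j t b).mp hmem).1
          simp only [this, integral_zero]
    _ = ∫ b in simplexT (μ ∘ j.succAbove),
          ∫ t in Icc 0 (μ j * (1 - ∑ i, b i / μ (j.succAbove i))), f (j.insertNth t b) :=
        integral_indicator (measurableSet_simplexT _)


lemma oneDim_pow (ν : ℕ) (d X B : ℝ) (hB : 0 ≤ B) (hX : X ≠ 0)
    (hpos : ∀ t ∈ Icc 0 B, 0 < d + t * X) :
    ∫ t in Icc 0 B, ((ν + 1).factorial : ℝ) / (d + t * X) ^ (ν + 2)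
      = ((ν.factorial : ℝ) / X) * ((d ^ (ν + 1))⁻¹ - ((d + B * X) ^ (ν + 1))⁻¹) := by
  rw [MeasureTheory.integral_Icc_eq_integral_Ioc, ← intervalIntegral.integral_of_le hB]
  have hderiv : ∀ t ∈ uIcc 0 B,
      HasDerivAt (fun t => -((ν.factorial : ℝ) / X) * ((d + t * X) ^ (ν + 1))⁻¹)
        (((ν + 1).factorial : ℝ) / (d + t * X) ^ (ν + 2)) t := by
    intro t ht
    rw [uIcc_of_le hB] at ht
    have hd : 0 < d + t * X := hpos t ht
    have h1 : HasDerivAt (fun t : ℝ => d + t * X) X t := by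
      simpa using ((hasDerivAt_id t).mul_const X).const_add d
    have h2 := (h1.pow (ν + 1)).inv (pow_ne_zero _ hd.ne')
    have h3 := h2.const_mul (-((ν.factorial : ℝ) / X))
    refine h3.congr_deriv ?_
    simp only [Pi.pow_apply, Nat.add_sub_cancel]
    have hne : (d + t * X) ≠ 0 := hd.ne'
    rw [show ((d + t * X) ^ (ν + 1)) ^ 2 = (d + t * X) ^ ν * (d + t * X) ^ (ν + 2) by ring]
    rw [Nat.factorial_succ]
    push_cast
    generalize d + t * X = u at hne ⊢
    field_simp
  rw [intervalIntegral.integral_eq_sub_of_hasDerivAt hderiv ?_]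
  · have h0 : d + 0 * X = d := by ring
    rw [h0]
    ring
  · apply ContinuousOn.intervalIntegrable
    apply ContinuousOn.div continuousOn_const
    · exact (by continuity : Continuous fun t : ℝ => (d + t * X) ^ (ν + 2)).continuousOn
    · intro t ht
      rw [uIcc_of_le hB] at ht
      exact pow_ne_zero _ (hpos t ht).ne'

lemma oneDim_affine (k : ℕ) (M r : ℝ) (hM : 0 < M) (hr : 0 ≤ r) :
    ∫ t in Icc 0 (M * r), (r - t / M) ^ k = M * r ^ (k + 1) / (k + 1) := by
  have hB : 0 ≤ M * r := mul_nonneg hM.le hr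
  rw [MeasureTheory.integral_Icc_eq_integral_Ioc, ← intervalIntegral.integral_of_le hB]
  have hderiv : ∀ t ∈ uIcc 0 (M * r),
      HasDerivAt (fun t => -(M / (k + 1)) * (r - t / M) ^ (k + 1)) ((r - t / M) ^ k) t := by
    intro t _
    have h1 : HasDerivAt (fun t : ℝ => r - t / M) (-(1 / M)) t := by
      simpa using ((hasDerivAt_id t).div_const M).const_sub r
    have h2 := (h1.pow (k + 1)).const_mul (-(M / (k + 1)))
    refine h2.congr_deriv ?_
    simp only [Pi.pow_apply, Nat.add_sub_cancel]
    push_cast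
    have hk : ((k : ℝ) + 1) ≠ 0 := by positivity
    field_simp
  rw [intervalIntegral.integral_eq_sub_of_hasDerivAt hderiv ?_]
  · have h1 : r - M * r / M = 0 := by field_simp; ring
    have h2 : r - 0 / M = r := by ring
    rw [h1, h2, zero_pow (Nat.succ_ne_zero k)]
    ring
  · exact (by continuity : Continuous fun t : ℝ => (r - t / M) ^ k).continuousOn.intervalIntegrable



lemma insertNth_sum_div {n : ℕ} (μ : Fin (n + 1) → ℝ) (j : Fin (n + 1)) (t : ℝ)
    (b : Fin n → ℝ) :
    ∑ i, Fin.insertNth (α := fun _ => ℝ) j t b i / μ i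
      = t / μ j + ∑ i, b i / μ (j.succAbove i) := by
  rw [Fin.sum_univ_succAbove (fun i => Fin.insertNth (α := fun _ => ℝ) j t b i / μ i) j]
  simp [Fin.insertNth_apply_same, Fin.insertNth_apply_succAbove]

lemma volA (n : ℕ) : ∀ (μ : Fin n → ℝ), (∀ i, 0 < μ i) → ∀ k : ℕ,
    ∫ a in simplexT μ, (1 - ∑ i, a i / μ i) ^ k
      = (∏ i, μ i) * (k.factorial : ℝ) / ((n + k).factorial : ℝ) := by
  induction n with
  | zero =>
    intro μ hμ k
    have huniv : simplexT μ = univ := by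
      ext a
      simp [simplexT]
    rw [huniv]
    simp [volume_pi]
    rw [div_self (by positivity)]
    simp [Measure.real, Measure.pi_univ]
  | succ n ih =>
    intro μ hμ k
    have hμ' : ∀ i, 0 < (μ ∘ (0 : Fin (n + 1)).succAbove) i := fun i => hμ _
    have hf : IntegrableOn (fun a : Fin (n + 1) → ℝ => (1 - ∑ i, a i / μ i) ^ k)
        (simplexT μ) :=
      ContinuousOn.integrableOn_compact (isCompact_simplexT μ hμ)
        (Continuous.continuousOn (by continuity))
    rw [setIntegral_simplexT_succAbove μ hμ 0 _ hf]
    have hcongr : ∀ b ∈ simplexT (μ ∘ (0 : Fin (n + 1)).succAbove),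
        (∫ t in Icc 0 (μ 0 * (1 - ∑ i, b i / μ ((0 : Fin (n + 1)).succAbove i))),
          (1 - ∑ i, Fin.insertNth (α := fun _ => ℝ) 0 t b i / μ i) ^ k)
        = (μ 0 / ((k : ℝ) + 1)) *
            (1 - ∑ i, b i / μ ((0 : Fin (n + 1)).succAbove i)) ^ (k + 1) := by
      intro b hb
      set S := ∑ i, b i / μ ((0 : Fin (n + 1)).succAbove i) with hS
      have hr : 0 ≤ 1 - S := by
        have := hb.2
        simp only [Function.comp] at this
        linarith
      have hptw : ∀ t : ℝ, (1 - ∑ i, Fin.insertNth (α := fun _ => ℝ) 0 t b i / μ i)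
          = ((1 - S) - t / μ 0) := by
        intro t
        rw [insertNth_sum_div]
        ring
      simp_rw [hptw]
      rw [oneDim_affine k (μ 0) (1 - S) (hμ 0) hr]
      ring
    rw [MeasureTheory.setIntegral_congr_fun (measurableSet_simplexT _) hcongr]
    rw [MeasureTheory.integral_const_mul]
    have hIH := ih _ hμ' (k + 1)
    simp only [Function.comp] at hIH
    rw [hIH]
    rw [Fin.prod_univ_succAbove μ 0]
    have h1 : ((k : ℝ) + 1) ≠ 0 := by positivity
    have h2 : ((n + (k + 1)).factorial : ℝ) = ((n + 1 + k).factorial : ℝ) := by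
      rw [show n + (k + 1) = n + 1 + k from by omega]
    rw [h2, Nat.factorial_succ]
    have h3 : ((n + 1 + k).factorial : ℝ) ≠ 0 := Nat.cast_ne_zero.mpr (Nat.factorial_ne_zero _)
    push_cast
    field_simp



lemma insertNth_sum_mul {n : ℕ} (X : Fin (n + 1) → ℝ) (j : Fin (n + 1)) (t : ℝ)
    (b : Fin n → ℝ) :
    ∑ i, Fin.insertNth (α := fun _ => ℝ) j t b i * X i
      = t * X j + ∑ i, b i * X (j.succAbove i) := by
  rw [Fin.sum_univ_succAbove (fun i => Fin.insertNth (α := fun _ => ℝ) j t b i * X i) j]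
  simp [Fin.insertNth_apply_same, Fin.insertNth_apply_succAbove]

lemma keyB (n : ℕ) : ∀ (μ X : Fin n → ℝ) (c : ℝ), (∀ i, 0 < μ i) → 0 < c →
    (∀ i, 0 < c + μ i * X i) →
    ∫ a in simplexT μ, (n.factorial : ℝ) / (c + ∑ i, a i * X i) ^ (n + 1)
      = (∏ i, μ i) / (c * ∏ i, (c + μ i * X i)) := by
  induction n with
  | zero =>
    intro μ X c hμ hc hcX
    have huniv : simplexT μ = univ := by ext a; simp [simplexT]
    rw [huniv]
    simp [volume_pi]
    simp [Measure.real, Measure.pi_univ]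
  | succ n ih =>
    intro μ X c hμ hc hcX
    by_cases hall : ∀ i, X i = 0
    · -- all X zero: constant integrand
      have hzero : ∀ a : Fin (n + 1) → ℝ, ∑ i, a i * X i = 0 := fun a =>
        Finset.sum_eq_zero fun i _ => by rw [hall i, mul_zero]
      have hstep : ∫ a in simplexT μ, ((n + 1).factorial : ℝ) / (c + ∑ i, a i * X i) ^ (n + 2)
          = ∫ a in simplexT μ,
              (((n + 1).factorial : ℝ) / c ^ (n + 2)) * (1 - ∑ i, a i / μ i) ^ 0 := by
        refine MeasureTheory.setIntegral_congr_fun (measurableSet_simplexT _) fun a _ => ?_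
        rw [hzero a, add_zero, pow_zero, mul_one]
      rw [hstep, MeasureTheory.integral_const_mul, volA (n + 1) μ hμ 0]
      have hprod : (∏ i, (c + μ i * X i)) = c ^ (n + 1) := by
        rw [Finset.prod_congr rfl fun i _ => by rw [hall i, mul_zero, add_zero]]
        simp [Finset.prod_const]
      rw [hprod]
      have hfac : ((n + 1 + 0).factorial : ℝ) = ((n + 1).factorial : ℝ) := by norm_num
      rw [hfac]
      have h1 : ((n + 1).factorial : ℝ) ≠ 0 := Nat.cast_ne_zero.mpr (Nat.factorial_ne_zero _)
      have h2 : c ≠ 0 := hc.ne'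
      rw [Nat.factorial_zero]
      field_simp
      ring
    · push_neg at hall
      obtain ⟨j, hj⟩ := hall
      have hμ' : ∀ i, 0 < μ (j.succAbove i) := fun i => hμ _
      have hμ'c : ∀ i, 0 < (μ ∘ j.succAbove) i := fun i => hμ _
      have hposT := pos_on_simplexT μ X c hμ hc hcX
      have hf : IntegrableOn
          (fun a : Fin (n + 1) → ℝ => (((n + 1).factorial : ℝ)) / (c + ∑ i, a i * X i) ^ (n + 2))
          (simplexT μ) := integrableOn_simplexT μ X c _ _ hμ hc hcX
      rw [setIntegral_simplexT_succAbove μ hμ j _ hf]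
      set X'' : Fin n → ℝ := fun i => X (j.succAbove i) - μ j * X j / μ (j.succAbove i) with hX''
      set c2 : ℝ := c + μ j * X j with hc2
      have hc2pos : 0 < c2 := hcX j
      have hcongr : ∀ b ∈ simplexT (μ ∘ j.succAbove),
          (∫ t in Icc 0 (μ j * (1 - ∑ i, b i / μ (j.succAbove i))),
            ((n + 1).factorial : ℝ) / (c + ∑ i, Fin.insertNth (α := fun _ => ℝ) j t b i * X i) ^ (n + 2))
          = (1 / X j) *
              ((n.factorial : ℝ) / (c + ∑ i, b i * X (j.succAbove i)) ^ (n + 1)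
               - (n.factorial : ℝ) / (c2 + ∑ i, b i * X'' i) ^ (n + 1)) := by
        intro b hb
        set S := ∑ i, b i / μ (j.succAbove i) with hS
        set d := c + ∑ i, b i * X (j.succAbove i) with hd
        set B := μ j * (1 - S) with hB
        have hr : 0 ≤ 1 - S := by
          have := hb.2
          simp only [Function.comp] at this
          linarith
        have hBnn : 0 ≤ B := mul_nonneg (hμ j).le hr
        have hptw : ∀ t : ℝ, c + ∑ i, Fin.insertNth (α := fun _ => ℝ) j t b i * X i
            = d + t * X j := by
          intro t
          rw [insertNth_sum_mul]
          ring
        have hpos : ∀ t ∈ Icc 0 B, 0 < d + t * X j := by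
          intro t ht
          rw [← hptw t]
          refine hposT _ ((insertNth_mem_simplexT μ hμ j t b).mpr ⟨hb, ht⟩)
        simp_rw [hptw]
        rw [oneDim_pow n d (X j) B hBnn hj hpos]
        have hdB : d + B * X j = c2 + ∑ i, b i * X'' i := by
          have hsum : ∑ i, b i * X'' i
              = (∑ i, b i * X (j.succAbove i)) - μ j * X j * S := by
            rw [hX'', hS]
            rw [Finset.mul_sum, ← Finset.sum_sub_distrib]
            refine Finset.sum_congr rfl fun i _ => ?_
            have : μ (j.succAbove i) ≠ 0 := (hμ' i).ne'
            field_simp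
          rw [hsum, hB, hc2, hd]
          ring
        rw [hdB]
        simp only [div_eq_mul_inv]
        ring
      rw [MeasureTheory.setIntegral_congr_fun (measurableSet_simplexT _) hcongr]
      have hcX' : ∀ i, 0 < c + (μ ∘ j.succAbove) i * (X ∘ j.succAbove) i := fun i => hcX _
      have hcX'' : ∀ i, 0 < c2 + (μ ∘ j.succAbove) i * X'' i := by
        intro i
        have h := hcX (j.succAbove i)
        have hne : μ (j.succAbove i) ≠ 0 := (hμ _).ne'
        have : (μ ∘ j.succAbove) i * X'' i = μ (j.succAbove i) * X (j.succAbove i) - μ j * X j := by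
          rw [hX'']
          simp only [Function.comp]
          field_simp
        rw [this, hc2]
        linarith
      have hint1 : IntegrableOn
          (fun b : Fin n → ℝ => (n.factorial : ℝ) / (c + ∑ i, b i * X (j.succAbove i)) ^ (n + 1))
          (simplexT (μ ∘ j.succAbove)) := by
        have := integrableOn_simplexT (μ ∘ j.succAbove) (X ∘ j.succAbove) c
          (n.factorial : ℝ) (n + 1) hμ'c hc hcX'
        simpa only [Function.comp] using this
      have hint2 : IntegrableOn
          (fun b : Fin n → ℝ => (n.factorial : ℝ) / (c2 + ∑ i, b i * X'' i) ^ (n + 1))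
          (simplexT (μ ∘ j.succAbove)) := by
        have := integrableOn_simplexT (μ ∘ j.succAbove) X'' c2
          (n.factorial : ℝ) (n + 1) hμ'c hc2pos hcX''
        simpa only [Function.comp] using this
      rw [MeasureTheory.integral_const_mul, MeasureTheory.integral_sub hint1 hint2]
      have hIH1 := ih (μ ∘ j.succAbove) (X ∘ j.succAbove) c hμ'c hc hcX'
      have hIH2 := ih (μ ∘ j.succAbove) X'' c2 hμ'c hc2pos hcX''
      simp only [Function.comp] at hIH1 hIH2
      rw [hIH1, hIH2]
      -- final algebra
      have hPeq : (∏ i, (c2 + μ (j.succAbove i) * X'' i)) = ∏ i, (c + μ (j.succAbove i) * X (j.succAbove i)) := by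
        refine Finset.prod_congr rfl fun i _ => ?_
        have hne : μ (j.succAbove i) ≠ 0 := (hμ _).ne'
        rw [hX'', hc2]
        field_simp
        ring
      rw [hPeq]
      rw [Fin.prod_univ_succAbove μ j, Fin.prod_univ_succAbove (fun i => c + μ i * X i) j]
      have hPpos : 0 < ∏ i, (c + μ (j.succAbove i) * X (j.succAbove i)) :=
        Finset.prod_pos fun i _ => hcX _
      have h1 : c ≠ 0 := hc.ne'
      have h2 : c2 ≠ 0 := hc2pos.ne'
      have h3 : (∏ i, (c + μ (j.succAbove i) * X (j.succAbove i))) ≠ 0 := hPpos.ne'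
      rw [hc2] at *
      have h2' : c + X j * μ j ≠ 0 := by rw [mul_comm]; exact h2
      field_simp
      ring


theorem complete_intersection_integral (n : ℕ) (hn : 0 < n)
    (m : Fin n → ℕ) (hm : ∀ i, 0 < m i)
    (X : Fin n → ℝ) (hX : ∀ i, 0 < X i) :
    ∫ a in {a : Fin n → ℝ | (∀ i, 0 ≤ a i) ∧ ∑ i, a i / (m i : ℝ) ≤ 1},
      (Nat.factorial n : ℝ) * (∏ i, X i) / (1 + ∑ i, a i * X i) ^ (n + 1) ∂volume
    = (∏ i, (m i : ℝ)) * (∏ i, X i) / ∏ i, (1 + (m i : ℝ) * X i) := by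
  have hμ : ∀ i, (0:ℝ) < (m i : ℝ) := fun i => Nat.cast_pos.mpr (hm i)
  have hcX : ∀ i, (0:ℝ) < 1 + (m i : ℝ) * X i := fun i => by
    have := hμ i; have := (hX i); nlinarith
  have hset : {a : Fin n → ℝ | (∀ i, 0 ≤ a i) ∧ ∑ i, a i / (m i : ℝ) ≤ 1}
      = simplexT (fun i => (m i : ℝ)) := rfl
  rw [hset]
  have hstep : ∫ a in simplexT (fun i => (m i : ℝ)),
        (Nat.factorial n : ℝ) * (∏ i, X i) / (1 + ∑ i, a i * X i) ^ (n + 1)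
      = ∫ a in simplexT (fun i => (m i : ℝ)),
        (∏ i, X i) * ((Nat.factorial n : ℝ) / (1 + ∑ i, a i * X i) ^ (n + 1)) := by
    refine MeasureTheory.setIntegral_congr_fun (measurableSet_simplexT _) fun a _ => ?_
    ring
  rw [hstep, MeasureTheory.integral_const_mul, keyB n (fun i => (m i : ℝ)) X 1 hμ one_pos hcX]
  have hP : (0:ℝ) < ∏ i, (1 + (m i : ℝ) * X i) := Finset.prod_pos fun i _ => hcX i
  rw [one_mul]
  field_simp
end

section
/- Let n ≥ 2 and X_1, X_2 > 0, and suppose N' ⊂ ℝ_{≥0}^{n-1} is a measurable region. Let N ⊂ ℝ_{≥0}^n be the cone over N' (placed in the hyperplane a_n = 0) with apex (0,...,0,m), for m > 0: N = {((1−t)b, tm) : b ∈ N', t ∈ [0,1]}. Then for positive reals X_1,...,X_n: ∫_N n! X_1⋯X_n/(1 + a·X)^{n+1} da = (m X_n/(1 + m X_n)) · ∫_{N'} (n−1)! X_1⋯X_{n−1}/(1 + b·X')^n db, where X' = (X_1,...,X_{n−1}). -/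
open MeasureTheory Pointwise
set_option maxHeartbeats 1000000

lemma deriv_algebra (n : ℕ) {m A u u' d d' : ℝ} (hm : m ≠ 0) (hA : A ≠ 0) (hd : d ≠ 0)
    (hrel : u' * d - u * d' = -(A/m)) :
    -(m/((n+1)*A)) * ((((n:ℝ)+1)*u^n*u' * d^(n+1) - u^(n+1)*(((n:ℝ)+1)*d^n*d')) / (d^(n+1))^2)
      = u^n / d^(n+2) := by
  have hn1 : ((n:ℝ)+1) ≠ 0 := by positivity
  have h1 : (((n:ℝ)+1)*u^n*u' * d^(n+1) - u^(n+1)*(((n:ℝ)+1)*d^n*d'))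
      = (((n:ℝ)+1)*u^n*d^n) * (u'*d - u*d') := by ring
  rw [h1, hrel]
  field_simp
  ring

lemma key1d (n : ℕ) {m S Xn : ℝ} (hm : 0 < m) (hS : 0 ≤ S) (hXn : 0 < Xn) :
    ∫ s in Set.Icc (0:ℝ) m, (1 - s/m)^n / (1 + (1 - s/m) * S + s * Xn)^(n+2)
      = m / ((n+1) * (1 + m*Xn) * (1+S)^(n+1)) := by
  have hA : (0:ℝ) < 1 + m * Xn := by nlinarith
  set A : ℝ := 1 + m * Xn with hAdef
  set D : ℝ → ℝ := fun s => 1 + (1 - s/m) * S + s * Xn with hDdef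
  have hDpos : ∀ s ∈ Set.Icc (0:ℝ) m, 0 < D s := by
    intro s hs
    have h1 : s / m ≤ 1 := (div_le_one hm).2 hs.2
    have h2 : 0 ≤ (1 - s/m) * S := mul_nonneg (by linarith) hS
    have h3 : 0 ≤ s * Xn := mul_nonneg hs.1 hXn.le
    simp only [hDdef]; linarith
  set F : ℝ → ℝ := fun s => -(m/((n+1)*A)) * ((1 - s/m)^(n+1) / (D s)^(n+1)) with hFdef
  have hderiv : ∀ s ∈ Set.uIcc (0:ℝ) m,
      HasDerivAt F ((1 - s/m)^n / (D s)^(n+2)) s := by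
    intro s hs
    rw [Set.uIcc_of_le hm.le] at hs
    have hDs := hDpos s hs
    have hu : HasDerivAt (fun s : ℝ => 1 - s/m) (-(1/m)) s := by
      simpa using ((hasDerivAt_id s).div_const m).const_sub 1
    have hD' : HasDerivAt D (-(1/m) * S + Xn) s := by
      have h1 : HasDerivAt (fun s : ℝ => 1 + (1 - s/m) * S) (-(1/m) * S) s :=
        (hu.mul_const S).const_add 1
      have h2 : HasDerivAt (fun s : ℝ => s * Xn) Xn s := by
        simpa using (hasDerivAt_id s).mul_const Xn
      simpa [hDdef, Pi.add_def] using h1.add h2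
    have hnum : HasDerivAt (fun s : ℝ => (1 - s/m)^(n+1))
        (((n:ℝ)+1) * (1 - s/m)^n * (-(1/m))) s := by
      simpa [Pi.pow_def] using hu.pow (n+1)
    have hden : HasDerivAt (fun s : ℝ => (D s)^(n+1))
        (((n:ℝ)+1) * (D s)^n * (-(1/m) * S + Xn)) s := by
      simpa [Pi.pow_def] using hD'.pow (n+1)
    have hdiv := (hnum.div hden (pow_ne_zero _ hDs.ne')).const_mul (-(m/((n+1)*A)))
    have hrel : (-(1/m)) * (D s) - (1 - s/m) * (-(1/m) * S + Xn) = -(A/m) := by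
      simp only [hDdef, hAdef]
      field_simp
      ring
    have halg := deriv_algebra n hm.ne' hA.ne' hDs.ne' hrel
    rw [← halg]
    exact hdiv
  have hcont : IntervalIntegrable (fun s => (1 - s/m)^n / (D s)^(n+2)) volume 0 m := by
    apply ContinuousOn.intervalIntegrable
    apply ContinuousOn.div
    · fun_prop
    · fun_prop
    · intro s hs
      rw [Set.uIcc_of_le hm.le] at hs
      exact pow_ne_zero _ (hDpos s hs).ne'
  have hFTC := intervalIntegral.integral_eq_sub_of_hasDerivAt hderiv hcont
  have hIoc : ∫ s in Set.Icc (0:ℝ) m, (1 - s/m)^n / (D s)^(n+2)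
      = ∫ s in (0:ℝ)..m, (1 - s/m)^n / (D s)^(n+2) := by
    rw [intervalIntegral.integral_of_le hm.le, MeasureTheory.integral_Icc_eq_integral_Ioc]
  rw [hIoc, hFTC]
  have hFm : F m = 0 := by
    simp only [hFdef]
    rw [div_self hm.ne']
    simp
  have hF0 : F 0 = -(m/((n+1)*A)) * (1 / (1+S)^(n+1)) := by
    simp only [hFdef, hDdef]
    norm_num
  rw [hFm, hF0]
  have h1S : (0:ℝ) < 1 + S := by linarith
  have hn1 : ((n:ℝ)+1) ≠ 0 := by positivity
  field_simp
  ring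

theorem cone_integral (n : ℕ) (hn : 1 ≤ n)
    (N' : Set (Fin n → ℝ)) (hmeas : MeasurableSet N')
    (hbdd : Bornology.IsBounded N') (hpos : ∀ b ∈ N', ∀ i, 0 ≤ b i)
    (m : ℝ) (hm : 0 < m)
    (X : Fin (n + 1) → ℝ) (hX : ∀ i, 0 < X i) :
    ∫ a in {x : Fin (n + 1) → ℝ | ∃ b ∈ N', ∃ t ∈ Set.Icc (0:ℝ) 1,
        x = Fin.snoc (fun j => (1 - t) * b j) (t * m)},
      (Nat.factorial (n + 1) : ℝ) * (∏ i, X i) /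
        (1 + ∑ i, a i * X i) ^ (n + 2) ∂volume
    = (m * X (Fin.last n) / (1 + m * X (Fin.last n))) *
      ∫ b in N', (Nat.factorial n : ℝ) * (∏ j, X (Fin.castSucc j)) /
        (1 + ∑ j, b j * X (Fin.castSucc j)) ^ (n + 1) ∂volume := by
  have hXn := hX (Fin.last n)
  set Xn := X (Fin.last n) with hXndef
  set C : ℝ := (Nat.factorial (n + 1) : ℝ) * ∏ i, X i with hCdef
  have hCpos : 0 < C := by
    apply mul_pos (by positivity)
    exact Finset.prod_pos fun i _ => hX i
  set Sb : (Fin n → ℝ) → ℝ := fun b => ∑ j, b j * X (Fin.castSucc j) with hSbdef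
  have hSbpos : ∀ b ∈ N', 0 ≤ Sb b := fun b hb =>
    Finset.sum_nonneg fun j _ => mul_nonneg (hpos b hb j) (hX _).le
  set H : ℝ × (Fin n → ℝ) → ℝ :=
    fun p => C / (1 + ((∑ j, p.2 j * X (Fin.castSucc j)) + p.1 * Xn)) ^ (n+2) with hHdef
  set Q : Set (ℝ × (Fin n → ℝ)) :=
    {p | ∃ t ∈ Set.Icc (0:ℝ) 1, p.1 = t * m ∧ ∃ b ∈ N', ∀ j, p.2 j = (1 - t) * b j} with hQdef
  set g : (Fin (n+1) → ℝ) → ℝ := fun a => C / (1 + ∑ i, a i * X i) ^ (n+2) with hgdef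
  set e := MeasurableEquiv.piFinSuccAbove (fun _ : Fin (n+1) => ℝ) (Fin.last n) with hedef
  have hsnoc : ∀ p : ℝ × (Fin n → ℝ), e.symm p = Fin.snoc p.2 p.1 := by
    intro p
    simp only [hedef, MeasurableEquiv.piFinSuccAbove_symm_apply, Fin.insertNthEquiv_last]
    rfl
  -- measurability of Q
  have hQmeas : MeasurableSet Q := by
    rcases N'.eq_empty_or_nonempty with hNe | hNe
    · have : Q = ∅ := by ext p; simp [hQdef, hNe]
      rw [this]; exact MeasurableSet.empty
    · have hQeq : Q = {p : ℝ × (Fin n → ℝ) | 0 ≤ p.1 ∧ p.1 < m ∧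
          (fun j => (1 - p.1/m)⁻¹ * p.2 j) ∈ N'} ∪
          (({m} : Set ℝ) ×ˢ ({0} : Set (Fin n → ℝ))) := by
        ext ⟨s, y⟩
        simp only [hQdef, Set.mem_setOf_eq, Set.mem_union, Set.mem_prod,
          Set.mem_singleton_iff]
        constructor
        · rintro ⟨t, ⟨ht0, ht1⟩, hst0, b, hb, hy0⟩
          have hst : s = t * m := hst0
          have hy : ∀ j, y j = (1 - t) * b j := hy0
          rcases lt_or_eq_of_le ht1 with h | rfl
          · left
            have htm : s / m = t := by rw [hst]; field_simp
            have h1t : (0:ℝ) < 1 - t := by linarith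
            refine ⟨by rw [hst]; exact mul_nonneg ht0 hm.le, by rw [hst]; nlinarith, ?_⟩
            have hfe : (fun j => (1 - s/m)⁻¹ * y j) = b := by
              funext j
              rw [htm, hy j, ← mul_assoc, inv_mul_cancel₀ h1t.ne', one_mul]
            rw [hfe]; exact hb
          · right
            refine ⟨by rw [hst]; ring, ?_⟩
            funext j
            simp [hy j]
        · rintro (⟨h0, h1, hmem⟩ | ⟨hs, hy⟩)
          · have hne : (1 - s/m) ≠ 0 := by
              have : s/m < 1 := (div_lt_one hm).2 h1
              intro hc; rw [sub_eq_zero] at hc; linarith [hc.symm]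
            refine ⟨s/m, ⟨div_nonneg h0 hm.le, (div_le_one hm).2 h1.le⟩,
              (div_mul_cancel₀ s hm.ne').symm, _, hmem, ?_⟩
            intro j
            rw [← mul_assoc, mul_inv_cancel₀ hne, one_mul]
          · obtain ⟨b, hb⟩ := hNe
            refine ⟨1, ⟨zero_le_one, le_refl 1⟩, by rw [hs]; ring, b, hb, fun j => ?_⟩
            rw [hy]; simp
      rw [hQeq]
      apply MeasurableSet.union
      · have hφ : Measurable (fun p : ℝ × (Fin n → ℝ) => fun j => (1 - p.1/m)⁻¹ * p.2 j) := by
          apply measurable_pi_lambda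
          intro j
          exact ((measurable_const.sub (measurable_fst.div_const m)).inv).mul
            ((measurable_pi_apply j).comp measurable_snd)
        exact (measurableSet_le measurable_const measurable_fst).inter
          ((measurableSet_lt measurable_fst measurable_const).inter (hφ hmeas))
      · exact (measurableSet_singleton m).prod (measurableSet_singleton 0)
  -- Step A: transfer to the product space
  have stepA : ∫ a in {x : Fin (n + 1) → ℝ | ∃ b ∈ N', ∃ t ∈ Set.Icc (0:ℝ) 1,
        x = Fin.snoc (fun j => (1 - t) * b j) (t * m)}, g a ∂volume
      = ∫ p in Q, H p ∂volume := by
    have h1 := ((volume_preserving_piFinSuccAbove (fun _ : Fin (n+1) => ℝ) (Fin.last n)).symm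
      _).setIntegral_preimage_emb (MeasurableEquiv.measurableEmbedding _) g
      {x : Fin (n + 1) → ℝ | ∃ b ∈ N', ∃ t ∈ Set.Icc (0:ℝ) 1,
        x = Fin.snoc (fun j => (1 - t) * b j) (t * m)}
    rw [← h1]
    have hpre : e.symm ⁻¹' {x : Fin (n + 1) → ℝ | ∃ b ∈ N', ∃ t ∈ Set.Icc (0:ℝ) 1,
        x = Fin.snoc (fun j => (1 - t) * b j) (t * m)} = Q := by
      ext p
      simp only [Set.mem_preimage, hsnoc, Set.mem_setOf_eq, hQdef]
      constructor
      · rintro ⟨b, hb, t, ht, hx⟩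
        refine ⟨t, ht, ?_, b, hb, ?_⟩
        · have := congrFun hx (Fin.last n)
          simpa [Fin.snoc_last] using this
        · intro j
          have := congrFun hx (Fin.castSucc j)
          simpa [Fin.snoc_castSucc] using this
      · rintro ⟨t, ht, h1, b, hb, h2⟩
        refine ⟨b, hb, t, ht, ?_⟩
        funext i
        refine Fin.lastCases ?_ (fun j => ?_) i
        · simp [Fin.snoc_last, h1]
        · simp [Fin.snoc_castSucc, h2 j]
    have hfun : (fun p => g (e.symm p)) = H := by
      funext p
      rw [hsnoc]
      simp only [hgdef, hHdef]
      congr 2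
      rw [Fin.sum_univ_castSucc]
      simp [Fin.snoc_castSucc, Fin.snoc_last]
      exact Or.inl rfl
    rw [hpre, ← hfun]
  -- boundedness data
  obtain ⟨R, hR⟩ := hbdd.subset_closedBall 0
  -- H is nonneg and bounded by C on "good" points
  have hHbound : ∀ s : ℝ, ∀ y : Fin n → ℝ, 0 ≤ s → (∀ j, 0 ≤ y j) → |H (s, y)| ≤ C := by
    intro s y hs hy
    have h1 : 0 ≤ ∑ j, y j * X (Fin.castSucc j) :=
      Finset.sum_nonneg fun j _ => mul_nonneg (hy j) (hX _).le
    have h2 : 0 ≤ s * Xn := mul_nonneg hs hXn.le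
    have hden : (1:ℝ) ≤ 1 + ((∑ j, y j * X (Fin.castSucc j)) + s * Xn) := by linarith
    have hpow : (1:ℝ) ≤ (1 + ((∑ j, y j * X (Fin.castSucc j)) + s * Xn)) ^ (n+2) :=
      one_le_pow₀ hden
    rw [abs_of_nonneg (div_nonneg hCpos.le (by linarith))]
    exact div_le_self hCpos.le hpow
  have hHmeas : Measurable H := by
    apply Measurable.div measurable_const
    apply Measurable.pow _ measurable_const
    apply Measurable.add measurable_const
    apply Measurable.add
    · apply Finset.measurable_sum
      intro j _
      exact ((measurable_pi_apply j).comp measurable_snd).mul measurable_const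
    · exact measurable_fst.mul measurable_const
  -- Integrability of the indicator on the product
  have I1 : Integrable (Q.indicator H) ((volume : Measure ℝ).prod volume) := by
    have hbox : MeasurableSet (Set.Icc (0:ℝ) m ×ˢ Metric.closedBall (0 : Fin n → ℝ) (max R 0)) :=
      measurableSet_Icc.prod measurableSet_closedBall
    have hbig : Integrable ((Set.Icc (0:ℝ) m ×ˢ
        Metric.closedBall (0 : Fin n → ℝ) (max R 0)).indicator (fun _ => C))
        ((volume : Measure ℝ).prod volume) := by
      rw [integrable_indicator_iff hbox]
      refine integrableOn_const (ne_of_lt ?_) (by simp)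
      rw [Measure.prod_prod]
      exact ENNReal.mul_lt_top (by simp [Real.volume_Icc]) measure_closedBall_lt_top.lt_top
    refine hbig.mono' ((hHmeas.indicator hQmeas).aestronglyMeasurable) ?_
    apply Filter.Eventually.of_forall
    intro p
    by_cases hp : p ∈ Q
    · obtain ⟨t, ⟨ht0, ht1⟩, hst0, b, hb, hy0⟩ := id hp
      have hst : p.1 = t * m := hst0
      have hy : ∀ j, p.2 j = (1 - t) * b j := hy0
      have hbox' : p ∈ Set.Icc (0:ℝ) m ×ˢ Metric.closedBall (0 : Fin n → ℝ) (max R 0) := by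
        constructor
        · exact ⟨by rw [hst]; exact mul_nonneg ht0 hm.le, by rw [hst]; nlinarith⟩
        · rw [Metric.mem_closedBall, dist_zero_right]
          rw [pi_norm_le_iff_of_nonneg (le_max_right R 0)]
          intro j
          rw [hy j, Real.norm_eq_abs, abs_mul, abs_of_nonneg (by linarith : (0:ℝ) ≤ 1 - t)]
          have hbj : |b j| ≤ R := by
            have := hR hb
            rw [Metric.mem_closedBall, dist_zero_right] at this
            exact le_trans (norm_le_pi_norm b j) this
          have h1t : 1 - t ≤ 1 := by linarith
          calc (1 - t) * |b j| ≤ 1 * |b j| := by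
                apply mul_le_mul_of_nonneg_right h1t (abs_nonneg _)
            _ = |b j| := one_mul _
            _ ≤ R := hbj
            _ ≤ max R 0 := le_max_left R 0
      rw [Set.indicator_of_mem hp, Set.indicator_of_mem hbox']
      rw [Real.norm_eq_abs]
      apply hHbound
      · rw [hst]; exact mul_nonneg ht0 hm.le
      · intro j; rw [hy j]; exact mul_nonneg (by linarith) (hpos b hb j)
    · rw [Set.indicator_of_notMem hp]
      simp only [norm_zero]
      exact Set.indicator_nonneg (fun _ _ => hCpos.le) p
  -- Fubini
  have stepB : ∫ p in Q, H p ∂volume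
      = ∫ s : ℝ, ∫ y : Fin n → ℝ, Q.indicator H (s, y) ∂volume ∂volume := by
    rw [← MeasureTheory.integral_indicator hQmeas, Measure.volume_eq_prod]
    exact MeasureTheory.integral_prod _ I1
  -- the inner integral
  set W : ℝ → ℝ := (Set.Icc (0:ℝ) m).indicator
    (fun s => (1 - s/m)^n * ∫ b in N', H (s, (1 - s/m) • b) ∂volume) with hWdef
  have stepC : ∀ s : ℝ, s ≠ m →
      (∫ y : Fin n → ℝ, Q.indicator H (s, y) ∂volume) = W s := by
    intro s hs
    by_cases hsIcc : s ∈ Set.Icc (0:ℝ) m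
    · have hslt : s < m := lt_of_le_of_ne hsIcc.2 hs
      have hr : 0 < 1 - s/m := by
        have : s/m < 1 := (div_lt_one hm).2 hslt
        linarith
      have hset : {y : Fin n → ℝ | (s, y) ∈ Q} = (1 - s/m) • N' := by
        ext y
        simp only [Set.mem_setOf_eq, hQdef]
        constructor
        · rintro ⟨t, ⟨ht0, ht1⟩, hst0, b, hb, hy0⟩
          have hst : s = t * m := hst0
          have hy : ∀ j, y j = (1 - t) * b j := hy0
          have htm : t = s / m := by rw [hst]; field_simp
          refine ⟨b, hb, ?_⟩
          funext j
          show (1 - s/m) * b j = y j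
          rw [hy j, htm]
        · rintro ⟨b, hb, hby⟩
          refine ⟨s/m, ⟨div_nonneg hsIcc.1 hm.le, (div_le_one hm).2 hsIcc.2⟩,
            (div_mul_cancel₀ s hm.ne').symm, b, hb, fun j => ?_⟩
          exact (congrFun hby j).symm
      have hsmeas : MeasurableSet ((1 - s/m) • N') := by
        have : (1 - s/m) • N' = (fun y : Fin n → ℝ => (1 - s/m)⁻¹ • y) ⁻¹' N' := by
          ext y
          rw [Set.mem_smul_set_iff_inv_smul_mem₀ hr.ne']
          rfl
        rw [this]
        exact (measurable_const_smul _) hmeas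
      have h1 : (fun y => Q.indicator H (s, y)) = ((1 - s/m) • N').indicator (fun y => H (s, y)) := by
        funext y
        have hiff : (s, y) ∈ Q ↔ y ∈ (1 - s/m) • N' := by rw [← hset]; exact Iff.rfl
        by_cases hy : (s, y) ∈ Q
        · rw [Set.indicator_of_mem hy, Set.indicator_of_mem (hiff.1 hy)]
        · rw [Set.indicator_of_notMem hy, Set.indicator_of_notMem (fun h => hy (hiff.2 h))]
      rw [h1, MeasureTheory.integral_indicator hsmeas]
      have hcs := MeasureTheory.Measure.setIntegral_comp_smul_of_pos volume (fun y => H (s, y)) N'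
        (R := 1 - s/m) hr
      rw [Module.finrank_fin_fun (R := ℝ), smul_eq_mul] at hcs
      rw [hWdef, Set.indicator_of_mem hsIcc]
      rw [hcs, ← mul_assoc, mul_inv_cancel₀ (pow_ne_zero n hr.ne'), one_mul]
    · have hempty : ∀ y : Fin n → ℝ, (s, y) ∉ Q := by
        rintro y ⟨t, ⟨ht0, ht1⟩, hst0, -⟩
        have hst : s = t * m := hst0
        apply hsIcc
        rw [hst]
        exact ⟨mul_nonneg ht0 hm.le, by nlinarith⟩
      have hzero : (fun y : Fin n → ℝ => Q.indicator H (s, y)) = fun _ => 0 :=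
        funext fun y => Set.indicator_of_notMem (hempty y) _
      rw [hzero, integral_zero, hWdef, Set.indicator_of_notMem hsIcc]
  have stepC' : ∫ s : ℝ, (∫ y : Fin n → ℝ, Q.indicator H (s, y) ∂volume) ∂volume
      = ∫ s : ℝ, W s ∂volume := by
    apply integral_congr_ae
    have hcompl : {s : ℝ | ¬ ((∫ y : Fin n → ℝ, Q.indicator H (s, y) ∂volume) = W s)}
        ⊆ {m} := by
      intro s hs
      by_contra h
      exact hs (stepC s h)
    exact measure_mono_null hcompl (measure_singleton m)
  -- unfold indicator
  have stepD : ∫ s : ℝ, W s ∂volume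
      = ∫ s in Set.Icc (0:ℝ) m, ∫ b in N', (1 - s/m)^n * H (s, (1 - s/m) • b) ∂volume ∂volume := by
    rw [hWdef, MeasureTheory.integral_indicator measurableSet_Icc]
    congr 1
    funext s
    exact (MeasureTheory.integral_const_mul _ _).symm
  -- swap
  have I2 : Integrable (Function.uncurry fun s b => (1 - s/m)^n * H (s, (1 - s/m) • b))
      ((volume.restrict (Set.Icc (0:ℝ) m)).prod (volume.restrict N')) := by
    rw [Measure.prod_restrict]
    have hfm : Measurable (Function.uncurry fun s b => (1 - s/m)^n * H (s, (1 - s/m) • b)) := by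
      have h1 : Measurable (fun p : ℝ × (Fin n → ℝ) => (p.1, (1 - p.1/m) • p.2)) :=
        measurable_fst.prodMk ((measurable_const.sub (measurable_fst.div_const m)).smul
          measurable_snd)
      exact ((measurable_const.sub (measurable_fst.div_const m)).pow_const n).mul
        (hHmeas.comp h1)
    haveI : IsFiniteMeasure (((volume : Measure ℝ).prod volume).restrict
        (Set.Icc (0:ℝ) m ×ˢ N')) := by
      constructor
      rw [Measure.restrict_apply_univ, Measure.prod_prod]
      exact ENNReal.mul_lt_top (by simp [Real.volume_Icc]) hbdd.measure_lt_top
    refine (integrable_const C).mono' hfm.aestronglyMeasurable ?_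
    rw [ae_restrict_iff' (measurableSet_Icc.prod hmeas)]
    apply Filter.Eventually.of_forall
    rintro ⟨s, b⟩ ⟨hsIcc0, hbN0⟩
    have hsIcc : s ∈ Set.Icc (0:ℝ) m := hsIcc0
    have hbN : b ∈ N' := hbN0
    have hr0 : (0:ℝ) ≤ 1 - s/m := by
      have : s/m ≤ 1 := (div_le_one hm).2 hsIcc.2
      linarith
    have hr1 : (1:ℝ) - s/m ≤ 1 := by
      have : 0 ≤ s/m := div_nonneg hsIcc.1 hm.le
      linarith
    simp only [Function.uncurry]
    rw [Real.norm_eq_abs, abs_mul, abs_of_nonneg (pow_nonneg hr0 n)]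
    calc (1 - s/m)^n * |H (s, (1 - s/m) • b)| ≤ 1 * C := by
          apply mul_le_mul (pow_le_one₀ hr0 hr1) ?_ (abs_nonneg _) zero_le_one
          apply hHbound s _ hsIcc.1
          intro j
          rw [Pi.smul_apply, smul_eq_mul]
          exact mul_nonneg hr0 (hpos b hbN j)
      _ = C := one_mul C
  have stepE : ∫ s in Set.Icc (0:ℝ) m, ∫ b in N', (1 - s/m)^n * H (s, (1 - s/m) • b) ∂volume ∂volume
      = ∫ b in N', ∫ s in Set.Icc (0:ℝ) m, (1 - s/m)^n * H (s, (1 - s/m) • b) ∂volume ∂volume :=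
    MeasureTheory.integral_integral_swap I2
  -- per-b computation
  have stepF : ∀ b ∈ N',
      (∫ s in Set.Icc (0:ℝ) m, (1 - s/m)^n * H (s, (1 - s/m) • b) ∂volume)
      = C * (m / ((n+1) * (1 + m * Xn) * (1 + Sb b)^(n+1))) := by
    intro b hb
    have hS := hSbpos b hb
    have hpt : ∀ s : ℝ, (1 - s/m)^n * H (s, (1 - s/m) • b)
        = C * ((1 - s/m)^n / (1 + (1 - s/m) * Sb b + s * Xn)^(n+2)) := by
      intro s
      simp only [hHdef, hSbdef, Pi.smul_apply, smul_eq_mul]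
      rw [show (∑ j, (1 - s/m) * b j * X (Fin.castSucc j))
          = (1 - s/m) * ∑ j, b j * X (Fin.castSucc j) by
        rw [Finset.mul_sum]; exact Finset.sum_congr rfl fun j _ => by ring]
      rw [show (1:ℝ) + ((1 - s/m) * (∑ j, b j * X (Fin.castSucc j)) + s * Xn)
          = 1 + (1 - s/m) * (∑ j, b j * X (Fin.castSucc j)) + s * Xn from (add_assoc _ _ _).symm]
      ring
    simp_rw [hpt]
    rw [MeasureTheory.integral_const_mul]
    rw [key1d n hm hS hXn]
  -- final algebra
  have stepG : ∫ b in N', (C * (m / ((n+1) * (1 + m * Xn) * (1 + Sb b)^(n+1)))) ∂volume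
      = (m * Xn / (1 + m * Xn)) *
        ∫ b in N', (Nat.factorial n : ℝ) * (∏ j, X (Fin.castSucc j)) /
          (1 + ∑ j, b j * X (Fin.castSucc j)) ^ (n + 1) ∂volume := by
    have hA : (0:ℝ) < 1 + m * Xn := by nlinarith
    have hptwise : ∀ b : Fin n → ℝ, C * (m / ((n+1) * (1 + m * Xn) * (1 + Sb b)^(n+1)))
        = (m * Xn / (1 + m * Xn)) * ((Nat.factorial n : ℝ) * (∏ j, X (Fin.castSucc j)) /
          (1 + ∑ j, b j * X (Fin.castSucc j)) ^ (n + 1)) := by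
      intro b
      have hSbb : Sb b = ∑ j, b j * X (Fin.castSucc j) := rfl
      rw [hSbb]
      set T : ℝ := (1 + ∑ j, b j * X (Fin.castSucc j)) ^ (n + 1) with hT
      have hprod : (∏ i, X i) = (∏ j, X (Fin.castSucc j)) * Xn := by
        rw [hXndef]; exact Fin.prod_univ_castSucc X
      have hfact : ((Nat.factorial (n+1) : ℕ) : ℝ) = ((n:ℝ)+1) * (Nat.factorial n : ℝ) := by
        rw [Nat.factorial_succ]; push_cast; ring
      rw [hCdef, hprod, hfact]
      rcases eq_or_ne T 0 with hT0 | hT0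
      · rw [hT0]; simp
      · have hn1 : ((n:ℝ)+1) ≠ 0 := by positivity
        field_simp
    calc ∫ b in N', (C * (m / ((n+1) * (1 + m * Xn) * (1 + Sb b)^(n+1)))) ∂volume
        = ∫ b in N', (m * Xn / (1 + m * Xn)) * ((Nat.factorial n : ℝ) * (∏ j, X (Fin.castSucc j)) /
            (1 + ∑ j, b j * X (Fin.castSucc j)) ^ (n + 1)) ∂volume := by
          simp_rw [hptwise]
      _ = _ := MeasureTheory.integral_const_mul _ _
  calc ∫ a in {x : Fin (n + 1) → ℝ | ∃ b ∈ N', ∃ t ∈ Set.Icc (0:ℝ) 1,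
        x = Fin.snoc (fun j => (1 - t) * b j) (t * m)}, g a ∂volume
      = ∫ p in Q, H p ∂volume := stepA
    _ = ∫ s : ℝ, ∫ y : Fin n → ℝ, Q.indicator H (s, y) ∂volume ∂volume := stepB
    _ = ∫ s : ℝ, W s ∂volume := stepC'
    _ = ∫ s in Set.Icc (0:ℝ) m, ∫ b in N', (1 - s/m)^n * H (s, (1 - s/m) • b) ∂volume ∂volume := stepD
    _ = ∫ b in N', ∫ s in Set.Icc (0:ℝ) m, (1 - s/m)^n * H (s, (1 - s/m) • b) ∂volume ∂volume := stepE
    _ = ∫ b in N', (C * (m / ((n+1) * (1 + m * Xn) * (1 + Sb b)^(n+1)))) ∂volume :=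
        MeasureTheory.setIntegral_congr_fun hmeas fun b hb => stepF b hb
    _ = _ := stepG
end

section
/- Let n ≥ 1 and let X_1, ..., X_n be indeterminates. For i = (i_1,...,i_n) with nonnegative integer entries, the identity 1 − 1/(1 + i_1 X_1 + ⋯ + i_n X_n) = (i_1 X_1 + ⋯ + i_n X_n)/(1 + i_1 X_1 + ⋯ + i_n X_n) holds in the field of rational functions, and consequently the integral of n! X_1⋯X_n/(1+a·X)^{n+1} over ℝ_{≥0}^n minus the translated orthant {a : a_j ≥ i_j ∀j} equals (i_1 X_1 + ⋯ + i_n X_n)/(1 + i_1 X_1 + ⋯ + i_n X_n) when X_1,...,X_n are positive reals. -/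
open MeasureTheory Set Filter

-- one-dimensional improper integral
lemma real1 (m : ℕ) (hm : 0 < m) (d Y : ℝ) (hd : 0 < d) (hY : 0 < Y) :
    (IntegrableOn (fun t : ℝ => 1 / (d + t * Y) ^ (m + 1)) (Ioi 0)) ∧
    ∫ t in Ioi (0:ℝ), 1 / (d + t * Y) ^ (m + 1) = 1 / (m * Y * d ^ m) := by
  obtain ⟨k, rfl⟩ : ∃ k, m = k + 1 := ⟨m - 1, (Nat.succ_pred_eq_of_pos hm).symm⟩
  set g : ℝ → ℝ := fun t => -(1 / (((k:ℝ) + 1) * Y * (d + t * Y) ^ (k + 1))) with hg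
  have hpos : ∀ t : ℝ, t ∈ Ici (0:ℝ) → 0 < d + t * Y := fun t ht =>
    add_pos_of_pos_of_nonneg hd (mul_nonneg ht hY.le)
  have hderiv : ∀ t ∈ Ici (0:ℝ), HasDerivAt g (1 / (d + t * Y) ^ (k + 1 + 1)) t := by
    intro t ht
    have hu : 0 < d + t * Y := hpos t ht
    have h1 : HasDerivAt (fun t : ℝ => d + t * Y) Y t := by
      simpa using (hasDerivAt_id t).mul_const Y |>.const_add d
    have h2 : HasDerivAt (fun t : ℝ => (d + t * Y) ^ (k + 1))
        (((k:ℝ) + 1) * (d + t * Y) ^ k * Y) t := by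
      simpa using (h1.fun_pow (k + 1))
    have h3 : HasDerivAt (fun y => -(1 / (((k:ℝ) + 1) * Y)) * ((d + y * Y) ^ (k + 1))⁻¹)
        (-(1 / (((k:ℝ) + 1) * Y)) * (-(((k:ℝ) + 1) * (d + t * Y) ^ k * Y) / ((d + t * Y) ^ (k + 1)) ^ 2)) t :=
      (h2.fun_inv (by positivity)).const_mul (-(1 / (((k:ℝ) + 1) * Y)))
    convert h3 using 1
    · funext s; rw [hg]; field_simp
    · have : ((d + t * Y) ^ (k + 1)) ^ 2 = (d + t * Y) ^ k * (d + t * Y) ^ (k + 1 + 1) := by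
        ring
      rw [this]
      field_simp
  have htend : Tendsto g atTop (nhds 0) := by
    have h1 : Tendsto (fun t : ℝ => d + t * Y) atTop atTop :=
      tendsto_atTop_add_const_left _ d (tendsto_id.atTop_mul_const hY)
    have h2 : Tendsto (fun t : ℝ => (d + t * Y) ^ (k + 1)) atTop atTop :=
      (tendsto_pow_atTop (Nat.succ_ne_zero k)).comp h1
    have h3 : Tendsto (fun t : ℝ => ((k:ℝ) + 1) * Y * (d + t * Y) ^ (k + 1)) atTop atTop :=
      h2.const_mul_atTop (by positivity)
    have h4 := h3.inv_tendsto_atTop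
    rw [hg]
    simpa [one_div] using h4.neg
  have hnn : ∀ t ∈ Ioi (0:ℝ), 0 ≤ 1 / (d + t * Y) ^ (k + 1 + 1) := by
    intro t ht
    have := hpos t (mem_Ici.mpr (le_of_lt ht))
    positivity
  constructor
  · exact integrableOn_Ioi_deriv_of_nonneg' hderiv hnn htend
  · rw [integral_Ioi_of_hasDerivAt_of_nonneg' hderiv hnn htend]
    rw [hg]
    simp only [zero_sub, neg_neg, mul_zero, zero_mul, add_zero, pow_succ]
    push_cast
    ring_nf

lemma orthant_meas (n : ℕ) : MeasurableSet {a : Fin n → ℝ | ∀ i, 0 ≤ a i} := by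
  have h : {a : Fin n → ℝ | ∀ i, 0 ≤ a i} = ⋂ i, {a : Fin n → ℝ | 0 ≤ a i} := by ext; simp
  rw [h]
  exact MeasurableSet.iInter fun i => measurableSet_le measurable_const (measurable_pi_apply i)

lemma sum_meas {n : ℕ} (c : ℝ) (X : Fin n → ℝ) (m : ℕ) :
    Measurable fun a : Fin n → ℝ =>
      ENNReal.ofReal ((n.factorial : ℝ) * (∏ i, X i) / (c + ∑ i, a i * X i) ^ m) := by
  apply ENNReal.measurable_ofReal.comp
  apply Measurable.div measurable_const
  apply Measurable.pow_const
  exact Measurable.const_add (Finset.measurable_sum _ fun i _ =>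
    (measurable_pi_apply i).mul_const _) c

lemma lint1 (m : ℕ) (hm : 0 < m) (d Y : ℝ) (hd : 0 < d) (hY : 0 < Y) :
    ∫⁻ t in Ici (0:ℝ), ENNReal.ofReal (1 / (d + t * Y) ^ (m + 1))
      = ENNReal.ofReal (1 / (m * Y * d ^ m)) := by
  obtain ⟨hint, hval⟩ := real1 m hm d Y hd hY
  rw [← restrict_Ioi_eq_restrict_Ici, ← hval,
    ← ofReal_integral_eq_lintegral_ofReal hint]
  filter_upwards [ae_restrict_mem measurableSet_Ioi] with t ht
  have : 0 < d + t * Y := add_pos_of_pos_of_nonneg hd (mul_nonneg (le_of_lt ht) hY.le)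
  positivity

lemma key_s19 : ∀ (n : ℕ) (c : ℝ), 0 < c → ∀ X : Fin n → ℝ, (∀ i, 0 < X i) →
    ∫⁻ a in {a : Fin n → ℝ | ∀ i, 0 ≤ a i},
      ENNReal.ofReal ((n.factorial : ℝ) * (∏ i, X i) / (c + ∑ i, a i * X i) ^ (n + 1)) ∂volume
    = ENNReal.ofReal (1 / c) := by
  intro n
  induction n with
  | zero =>
    intro c hc X hX
    have h1 : {a : Fin 0 → ℝ | ∀ i, 0 ≤ a i} = Set.univ := by
      ext a; simp [Fin.forall_fin_zero_pi]
    rw [h1, Measure.restrict_univ]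
    simp only [Finset.univ_eq_empty, Finset.sum_empty, Finset.prod_empty, Nat.factorial_zero,
      Nat.cast_one, one_mul, add_zero, pow_one]
    rw [lintegral_const]
    have h2 : (volume : Measure (Fin 0 → ℝ)) Set.univ = 1 := by
      simp [volume_pi, Measure.pi_univ]
    rw [h2, mul_one]
    congr 1
    simp
  | succ n IH =>
    intro c hc X hX
    set Y : Fin n → ℝ := fun j => X ((0 : Fin (n+1)).succAbove j) with hYdef
    have hYpos : ∀ j, 0 < Y j := fun j => hX _
    set e := MeasurableEquiv.piFinSuccAbove (fun _ : Fin (n+1) => ℝ) 0 with he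
    have hmp := (volume_preserving_piFinSuccAbove (fun _ : Fin (n+1) => ℝ) 0).symm
    have hcomp := hmp.setLIntegral_comp_preimage_emb e.symm.measurableEmbedding
      (fun a : Fin (n+1) → ℝ => ENNReal.ofReal
        (((n+1).factorial : ℝ) * (∏ i, X i) / (c + ∑ i, a i * X i) ^ (n + 1 + 1)))
      {a : Fin (n+1) → ℝ | ∀ i, 0 ≤ a i}
    rw [← hcomp]
    have hsymm : ∀ p : ℝ × (Fin n → ℝ), e.symm p = Fin.insertNth 0 p.1 p.2 := fun p => rfl
    have hpre : e.symm ⁻¹' {a : Fin (n+1) → ℝ | ∀ i, 0 ≤ a i}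
        = Ici (0:ℝ) ×ˢ {a : Fin n → ℝ | ∀ i, 0 ≤ a i} := by
      ext ⟨t, a⟩
      simp only [Set.mem_preimage, Set.mem_setOf_eq, Set.mem_prod, Set.mem_Ici, hsymm]
      rw [Fin.forall_iff_succAbove (0 : Fin (n+1))]
      simp
    rw [hpre, Measure.volume_eq_prod, ← Measure.prod_restrict]
    have hmeas : Measurable fun p : ℝ × (Fin n → ℝ) => ENNReal.ofReal
        (((n+1).factorial : ℝ) * (∏ i, X i) / (c + ∑ i, (e.symm p) i * X i) ^ (n + 1 + 1)) :=
      (sum_meas c X (n+1+1)).comp e.symm.measurable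
    rw [lintegral_prod_symm _ hmeas.aemeasurable]
    have hinner : ∀ a ∈ {a : Fin n → ℝ | ∀ i, 0 ≤ a i},
        (∫⁻ t in Ici (0:ℝ), ENNReal.ofReal
          (((n+1).factorial : ℝ) * (∏ i, X i) / (c + ∑ i, (e.symm (t, a)) i * X i) ^ (n + 1 + 1)))
        = ENNReal.ofReal ((n.factorial : ℝ) * (∏ j, Y j) / (c + ∑ j, a j * Y j) ^ (n + 1)) := by
      intro a ha
      have had : 0 < c + ∑ j, a j * Y j :=
        add_pos_of_pos_of_nonneg hc (Finset.sum_nonneg fun j _ =>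
          mul_nonneg (ha j) (hYpos j).le)
      set d := c + ∑ j, a j * Y j with hd
      have hsum : ∀ t : ℝ, c + ∑ i, (e.symm (t, a)) i * X i = d + t * X 0 := by
        intro t
        rw [hsymm]
        dsimp only
        rw [Fin.sum_univ_succAbove (fun i : Fin (n+1) => Fin.insertNth (α := fun _ => ℝ) 0 t a i * X i) 0]
        simp only [Fin.insertNth_apply_same, Fin.insertNth_apply_succAbove]
        rw [hd, hYdef]
        ring
      have hprodX : (∏ i, X i) = X 0 * ∏ j, Y j := Fin.prod_univ_succAbove X 0
      have hK : (0:ℝ) ≤ ((n+1).factorial : ℝ) * (X 0 * ∏ j, Y j) :=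
        mul_nonneg (Nat.cast_nonneg _)
          (mul_nonneg (hX 0).le (Finset.prod_nonneg fun j _ => (hYpos j).le))
      calc ∫⁻ t in Ici (0:ℝ), ENNReal.ofReal
            (((n+1).factorial : ℝ) * (∏ i, X i) / (c + ∑ i, (e.symm (t, a)) i * X i) ^ (n + 1 + 1))
          = ∫⁻ t in Ici (0:ℝ), ENNReal.ofReal (((n+1).factorial : ℝ) * (X 0 * ∏ j, Y j))
              * ENNReal.ofReal (1 / (d + t * X 0) ^ (n + 1 + 1)) := by
            apply setLIntegral_congr_fun measurableSet_Ici
            intro t ht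
            dsimp only
            rw [hsum t, hprodX, ← ENNReal.ofReal_mul hK]
            congr 1
            ring
        _ = ENNReal.ofReal (((n+1).factorial : ℝ) * (X 0 * ∏ j, Y j))
              * ENNReal.ofReal (1 / ((n+1 : ℕ) * X 0 * d ^ (n+1))) := by
            rw [lintegral_const_mul _ ?_, lint1 (n+1) (Nat.succ_pos n) d (X 0) had (hX 0)]
            exact ENNReal.measurable_ofReal.comp
              ((measurable_const.div ((Measurable.const_add
                ((measurable_id.mul_const (X 0))) d).pow_const _)))
        _ = ENNReal.ofReal ((n.factorial : ℝ) * (∏ j, Y j) / d ^ (n + 1)) := by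
            rw [← ENNReal.ofReal_mul hK]
            congr 1
            have hd0 : d ≠ 0 := ne_of_gt had
            have hX0 : X 0 ≠ 0 := ne_of_gt (hX 0)
            rw [Nat.factorial_succ]
            push_cast
            field_simp
    rw [setLIntegral_congr_fun (orthant_meas n) hinner]
    exact IH c hc Y hYpos

theorem principal_monomial (n : ℕ) (hn : 0 < n) (X : Fin n → ℝ) (hX : ∀ i, 0 < X i)
    (I : Fin n → ℝ) (hI : ∀ j, 0 ≤ I j) :
    (1 - 1 / (1 + ∑ j, I j * X j)
      = (∑ j, I j * X j) / (1 + ∑ j, I j * X j)) ∧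
    ∫ a in {a : Fin n → ℝ | ∀ i, 0 ≤ a i} \ {a : Fin n → ℝ | ∀ j, I j ≤ a j},
      (Nat.factorial n : ℝ) * (∏ i, X i) / (1 + ∑ i, a i * X i) ^ (n + 1) ∂volume
    = (∑ j, I j * X j) / (1 + ∑ j, I j * X j) := by
  have hS : 0 ≤ ∑ j, I j * X j :=
    Finset.sum_nonneg fun j _ => mul_nonneg (hI j) (hX j).le
  have hc : (0:ℝ) < 1 + ∑ j, I j * X j := by linarith
  have hc0 : (1 + ∑ j, I j * X j) ≠ 0 := ne_of_gt hc
  have part1 : 1 - 1 / (1 + ∑ j, I j * X j)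
      = (∑ j, I j * X j) / (1 + ∑ j, I j * X j) := by
    field_simp
    ring
  refine ⟨part1, ?_⟩
  set A := {a : Fin n → ℝ | ∀ i, 0 ≤ a i} with hA
  set B := {a : Fin n → ℝ | ∀ j, I j ≤ a j} with hB
  have hAm : MeasurableSet A := orthant_meas n
  have hBm : MeasurableSet B := by
    have h : B = ⋂ j, {a : Fin n → ℝ | I j ≤ a j} := by ext; simp [hB]
    rw [h]
    exact MeasurableSet.iInter fun j =>
      measurableSet_le measurable_const (measurable_pi_apply j)
  have hBA : B ⊆ A := fun a ha i => le_trans (hI i) (ha i)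
  set f : (Fin n → ℝ) → ℝ :=
    fun a => (Nat.factorial n : ℝ) * (∏ i, X i) / (1 + ∑ i, a i * X i) ^ (n + 1) with hf
  have hfm : Measurable f := by
    apply Measurable.div measurable_const
    apply Measurable.pow_const
    exact Measurable.const_add (Finset.measurable_sum _ fun i _ =>
      (measurable_pi_apply i).mul_const _) 1
  have hfnn : ∀ a ∈ A, 0 ≤ f a := by
    intro a ha
    have h1 : 0 < 1 + ∑ i, a i * X i := by
      have : 0 ≤ ∑ i, a i * X i :=
        Finset.sum_nonneg fun i _ => mul_nonneg (ha i) (hX i).le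
      linarith
    have h2 : 0 ≤ (Nat.factorial n : ℝ) * ∏ i, X i :=
      mul_nonneg (Nat.cast_nonneg _) (Finset.prod_nonneg fun i _ => (hX i).le)
    positivity
  -- lintegral over A
  have hIA : ∫⁻ a in A, ENNReal.ofReal (f a) = ENNReal.ofReal 1 := by
    have := key_s19 n 1 one_pos X hX
    simpa [hf] using this
  -- lintegral over B via translation
  have hIB : ∫⁻ a in B, ENNReal.ofReal (f a)
      = ENNReal.ofReal (1 / (1 + ∑ j, I j * X j)) := by
    have hmp : MeasurePreserving (fun a : Fin n → ℝ => a + I) volume volume :=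
      measurePreserving_add_right volume I
    have hemb : MeasurableEmbedding (fun a : Fin n → ℝ => a + I) :=
      (MeasurableEquiv.addRight I).measurableEmbedding
    have hcomp := hmp.setLIntegral_comp_preimage_emb hemb
      (fun a => ENNReal.ofReal (f a)) B
    rw [← hcomp]
    have hpre : (fun a : Fin n → ℝ => a + I) ⁻¹' B = A := by
      ext a
      simp only [Set.mem_preimage, hB, hA, Set.mem_setOf_eq, Pi.add_apply]
      constructor
      · intro h j; linarith [h j]
      · intro h j; linarith [h j]
    rw [hpre]
    have hptwise : ∀ a : Fin n → ℝ, f (a + I)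
        = (Nat.factorial n : ℝ) * (∏ i, X i)
          / ((1 + ∑ j, I j * X j) + ∑ i, a i * X i) ^ (n + 1) := by
      intro a
      rw [hf]
      congr 2
      simp only [Pi.add_apply]
      rw [show (∑ i, (a i + I i) * X i) = (∑ i, a i * X i) + ∑ i, I i * X i by
        rw [← Finset.sum_add_distrib]; congr 1; ext i; ring]
      ring
    calc ∫⁻ a in A, ENNReal.ofReal (f (a + I))
        = ∫⁻ a in A, ENNReal.ofReal ((Nat.factorial n : ℝ) * (∏ i, X i)
            / ((1 + ∑ j, I j * X j) + ∑ i, a i * X i) ^ (n + 1)) := by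
          apply lintegral_congr; intro a; rw [hptwise a]
      _ = ENNReal.ofReal (1 / (1 + ∑ j, I j * X j)) := key_s19 n _ hc X hX
  -- split
  have hsplit : ∫⁻ a in A, ENNReal.ofReal (f a)
      = (∫⁻ a in B, ENNReal.ofReal (f a)) + ∫⁻ a in A \ B, ENNReal.ofReal (f a) := by
    rw [← lintegral_union (hAm.diff hBm) Set.disjoint_sdiff_right,
      Set.union_diff_cancel hBA]
  have hle : (1:ℝ) / (1 + ∑ j, I j * X j) ≤ 1 := by
    rw [div_le_one hc]; linarith
  have h1 : (0:ℝ) ≤ 1 / (1 + ∑ j, I j * X j) := by positivity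
  have hdiff : ∫⁻ a in A \ B, ENNReal.ofReal (f a)
      = ENNReal.ofReal (1 - 1 / (1 + ∑ j, I j * X j)) := by
    rw [hIA, hIB] at hsplit
    rw [ENNReal.ofReal_sub _ h1, hsplit,
      ENNReal.add_sub_cancel_left ENNReal.ofReal_ne_top]
  have hnnae : 0 ≤ᵐ[volume.restrict (A \ B)] f := by
    filter_upwards [ae_restrict_mem (hAm.diff hBm)] with a ha
    exact hfnn a ha.1
  rw [integral_eq_lintegral_of_nonneg_ae hnnae hfm.aestronglyMeasurable, hdiff,
    ENNReal.toReal_ofReal (by linarith), part1]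
end
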